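/- arXiv:2301.13706 — 5 statements merged into one kernel-verified Lean document; each statement's English description precedes it below -/
import Mathlib

section
/- Let U : ℝ^d → ℝ be continuously differentiable and suppose there exist ℓ ≥ 0, exponents 0 < α₁ ≤ … ≤ α_N ≤ 1 and constants 0 < L_i ≤ L such that for all x, y, ‖∇U(x) − ∇U(y)‖ ≤ (1 + ‖x‖^ℓ + ‖y‖^ℓ) ∑_{i=1}^N L_i ‖x − y‖^{α_i}. Then for all x, y, U(y) ≤ U(x) + ⟨∇U(x), y − x⟩ + (2L/(1+α₁)) (1 + ‖x‖^ℓ + ‖y‖^ℓ) ∑_{i=1}^N ‖x − y‖^{1+α_i}. -/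
open MeasureTheory Real

/-- descent-type upper bound under α-mixture locally smooth gradients. -/
theorem mixture_locally_smooth_descent
    (d N : ℕ) (hd : 0 < d) (hN : 0 < N)
    (U : EuclideanSpace ℝ (Fin d) → ℝ) (hU : ContDiff ℝ 1 U)
    (ℓ : ℝ) (hℓ : 0 ≤ ℓ)
    (α : Fin N → ℝ) (hα0 : ∀ i, 0 < α i) (hα1 : ∀ i, α i ≤ 1) (hαmono : Monotone α)
    (L : Fin N → ℝ) (Lmax : ℝ) (hLpos : ∀ i, 0 < L i) (hLle : ∀ i, L i ≤ Lmax)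
    (hsmooth : ∀ x y, ‖gradient U x - gradient U y‖ ≤
      (1 + ‖x‖ ^ ℓ + ‖y‖ ^ ℓ) * ∑ i, L i * ‖x - y‖ ^ (α i)) :
    ∀ x y, U y ≤ U x + (inner ℝ (gradient U x) (y - x) : ℝ) +
      (2 * Lmax / (1 + α ⟨0, hN⟩)) * (1 + ‖x‖ ^ ℓ + ‖y‖ ^ ℓ) *
        ∑ i, ‖x - y‖ ^ (1 + α i) := by
  intro x y
  set i0 : Fin N := ⟨0, hN⟩ with hi0
  have hLmax : 0 < Lmax := lt_of_lt_of_le (hLpos i0) (hLle i0)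
  have hα00 : 0 < α i0 := hα0 i0
  set v : EuclideanSpace ℝ (Fin d) := y - x with hv
  set z : ℝ → EuclideanSpace ℝ (Fin d) := fun t => x + t • v with hz
  set nv : ℝ := ‖v‖ with hnv
  have hnv0 : 0 ≤ nv := norm_nonneg _
  set A : ℝ := 1 + ‖x‖ ^ ℓ + ‖y‖ ^ ℓ with hA
  have hxpow : (0:ℝ) ≤ ‖x‖ ^ ℓ := Real.rpow_nonneg (norm_nonneg _) _
  have hypow : (0:ℝ) ≤ ‖y‖ ^ ℓ := Real.rpow_nonneg (norm_nonneg _) _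
  have hApos : 0 < A := by simp only [hA]; linarith
  have hdiff : Differentiable ℝ U := hU.differentiable one_ne_zero
  -- derivative along the segment
  have hderiv : ∀ t : ℝ, HasDerivAt (fun s => U (z s))
      ((inner ℝ (gradient U (z t)) v : ℝ)) t := by
    intro t
    have h1 : HasDerivAt z v t := by
      have h := ((hasDerivAt_id t).smul_const v).const_add x
      rw [one_smul] at h
      exact h
    have h2 : HasFDerivAt U (InnerProductSpace.toDual ℝ _ (gradient U (z t))) (z t) :=
      (hdiff (z t)).hasGradientAt.hasFDerivAt
    have h3 := h2.comp_hasDerivAt t h1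
    exact h3
  have hgradcont : Continuous fun w => gradient U w := by
    have h1 : Continuous fun w => fderiv ℝ U w := hU.continuous_fderiv one_ne_zero
    exact (InnerProductSpace.toDual ℝ _).symm.continuous.comp h1
  have hcontz : Continuous z := by
    apply continuous_const.add
    exact continuous_id.smul continuous_const
  have hg'cont : Continuous fun t : ℝ => (inner ℝ (gradient U (z t)) v : ℝ) :=
    (hgradcont.comp hcontz).inner continuous_const
  have hint : IntervalIntegrable (fun t : ℝ => (inner ℝ (gradient U (z t)) v : ℝ))
      volume 0 1 := hg'cont.intervalIntegrable 0 1
  have hftc : ∫ t in (0:ℝ)..1, (inner ℝ (gradient U (z t)) v : ℝ) = U y - U x := by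
    have := intervalIntegral.integral_eq_sub_of_hasDerivAt
      (f := fun s => U (z s)) (fun t _ => hderiv t) hint
    have hz0 : z 0 = x := by simp [hz]
    have hz1 : z 1 = y := by simp [hz, hv]
    rw [this]
    show U (z 1) - U (z 0) = U y - U x
    rw [hz0, hz1]
  set c : ℝ := (inner ℝ (gradient U x) v : ℝ) with hc
  -- the bounding function
  set B : ℝ → ℝ := fun t => ∑ i, (2 * A * Lmax * nv ^ (1 + α i)) * t ^ (α i) with hB
  have hBcont : Continuous B := by
    apply continuous_finset_sum
    intro i _
    apply continuous_const.mul
    apply continuous_iff_continuousAt.mpr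
    intro t
    exact Real.continuousAt_rpow_const t _ (Or.inr (hα0 i).le)
  have hBint : IntervalIntegrable B volume 0 1 := hBcont.intervalIntegrable 0 1
  have hfint : IntervalIntegrable (fun t : ℝ => (inner ℝ (gradient U (z t)) v : ℝ) - c)
      volume 0 1 := hint.sub (intervalIntegrable_const)
  -- pointwise bound
  have hpt : ∀ t ∈ Set.Icc (0:ℝ) 1,
      (inner ℝ (gradient U (z t)) v : ℝ) - c ≤ B t := by
    intro t ht
    obtain ⟨ht0, ht1⟩ := ht
    have hzt : ‖z t - x‖ = t * nv := by
      have : z t - x = t • v := by simp [hz]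
      rw [this, norm_smul, Real.norm_eq_abs, abs_of_nonneg ht0]
    have hinner : (inner ℝ (gradient U (z t)) v : ℝ) - c =
        (inner ℝ (gradient U (z t) - gradient U x) v : ℝ) := by
      rw [hc, inner_sub_left]
    rw [hinner]
    calc (inner ℝ (gradient U (z t) - gradient U x) v : ℝ)
        ≤ ‖gradient U (z t) - gradient U x‖ * nv := by
          exact real_inner_le_norm _ _
      _ ≤ ((1 + ‖z t‖ ^ ℓ + ‖x‖ ^ ℓ) * ∑ i, L i * ‖z t - x‖ ^ (α i)) * nv := by
          apply mul_le_mul_of_nonneg_right (hsmooth (z t) x) hnv0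
      _ ≤ ((2 * A) * ∑ i, L i * ‖z t - x‖ ^ (α i)) * nv := by
          apply mul_le_mul_of_nonneg_right _ hnv0
          apply mul_le_mul_of_nonneg_right _ _
          · -- 1 + ‖z t‖ ^ ℓ + ‖x‖ ^ ℓ ≤ 2 * A
            have hztn : ‖z t‖ ^ ℓ ≤ ‖x‖ ^ ℓ + ‖y‖ ^ ℓ := by
              have hzle : ‖z t‖ ≤ max ‖x‖ ‖y‖ := by
                have : z t = (1 - t) • x + t • y := by
                  simp only [hz, hv]
                  module
                rw [this]
                calc ‖(1 - t) • x + t • y‖ ≤ ‖(1 - t) • x‖ + ‖t • y‖ := norm_add_le _ _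
                  _ = (1 - t) * ‖x‖ + t * ‖y‖ := by
                      rw [norm_smul, norm_smul, Real.norm_eq_abs, Real.norm_eq_abs,
                        abs_of_nonneg (by linarith), abs_of_nonneg ht0]
                  _ ≤ (1 - t) * max ‖x‖ ‖y‖ + t * max ‖x‖ ‖y‖ := by
                      gcongr
                      · exact le_max_left _ _
                      · exact le_max_right _ _
                  _ = max ‖x‖ ‖y‖ := by ring
              have h2 : ‖z t‖ ^ ℓ ≤ (max ‖x‖ ‖y‖) ^ ℓ :=
                Real.rpow_le_rpow (norm_nonneg _) hzle hℓ
              rcases le_total ‖x‖ ‖y‖ with h | h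
              · rw [max_eq_right h] at h2; linarith
              · rw [max_eq_left h] at h2; linarith
            simp only [hA]
            linarith
          · apply Finset.sum_nonneg
            intro i _
            exact mul_nonneg (hLpos i).le (Real.rpow_nonneg (norm_nonneg _) _)
      _ ≤ B t := by
          simp only [hB]
          rw [Finset.mul_sum, Finset.sum_mul]
          apply Finset.sum_le_sum
          intro i _
          have h1 : ‖z t - x‖ ^ (α i) = t ^ (α i) * nv ^ (α i) := by
            rw [hzt, Real.mul_rpow ht0 hnv0]
          have h2 : nv ^ (1 + α i) = nv * nv ^ (α i) := by
            rw [Real.rpow_add_of_nonneg hnv0 one_pos.le (hα0 i).le, Real.rpow_one]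
          rw [h1, h2]
          have ht' : (0:ℝ) ≤ t ^ (α i) := Real.rpow_nonneg ht0 _
          have hn' : (0:ℝ) ≤ nv ^ (α i) := Real.rpow_nonneg hnv0 _
          have hX : (0:ℝ) ≤ 2 * A * (t ^ (α i) * nv ^ (α i)) * nv :=
            mul_nonneg (mul_nonneg (mul_nonneg (by norm_num) hApos.le)
              (mul_nonneg ht' hn')) hnv0
          calc 2 * A * (L i * (t ^ (α i) * nv ^ (α i))) * nv
              = (2 * A * (t ^ (α i) * nv ^ (α i)) * nv) * L i := by ring
            _ ≤ (2 * A * (t ^ (α i) * nv ^ (α i)) * nv) * Lmax :=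
                mul_le_mul_of_nonneg_left (hLle i) hX
            _ = 2 * A * Lmax * (nv * nv ^ (α i)) * t ^ (α i) := by ring
  -- value of the integral of B
  have hBval : ∫ t in (0:ℝ)..1, B t =
      ∑ i, (2 * A * Lmax * nv ^ (1 + α i)) / (α i + 1) := by
    rw [hB, intervalIntegral.integral_finset_sum]
    · apply Finset.sum_congr rfl
      intro i _
      rw [intervalIntegral.integral_const_mul,
        integral_rpow (Or.inl (by linarith [hα0 i])),
        Real.one_rpow, Real.zero_rpow (by linarith [hα0 i])]
      ring
    · intro i _
      apply Continuous.intervalIntegrable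
      apply continuous_const.mul
      apply continuous_iff_continuousAt.mpr
      intro t
      exact Real.continuousAt_rpow_const t _ (Or.inr (hα0 i).le)
  -- assemble
  have key : U y - U x - c ≤ ∫ t in (0:ℝ)..1, B t := by
    have h1 : ∫ t in (0:ℝ)..1, ((inner ℝ (gradient U (z t)) v : ℝ) - c)
        = U y - U x - c := by
      rw [intervalIntegral.integral_sub hint intervalIntegrable_const, hftc]
      simp
    rw [← h1]
    exact intervalIntegral.integral_mono_on one_pos.le hfint hBint hpt
  have hfin : ∫ t in (0:ℝ)..1, B t ≤
      (2 * Lmax / (1 + α i0)) * A * ∑ i, ‖x - y‖ ^ (1 + α i) := by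
    rw [hBval, Finset.mul_sum]
    apply Finset.sum_le_sum
    intro i _
    have hxy : ‖x - y‖ = nv := by rw [hnv, hv, norm_sub_rev]
    rw [hxy]
    have hαle : α i0 ≤ α i := hαmono (by simp [hi0, Fin.le_def])
    have hnvp : (0:ℝ) ≤ nv ^ (1 + α i) := Real.rpow_nonneg hnv0 _
    have hnn : (0:ℝ) ≤ 2 * A * Lmax * nv ^ (1 + α i) :=
      mul_nonneg (mul_nonneg (mul_nonneg (by norm_num) hApos.le) hLmax.le) hnvp
    calc 2 * A * Lmax * nv ^ (1 + α i) / (α i + 1)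
        ≤ 2 * A * Lmax * nv ^ (1 + α i) / (1 + α i0) := by
          apply div_le_div_of_nonneg_left hnn (by linarith) (by linarith)
      _ = 2 * Lmax / (1 + α i0) * A * nv ^ (1 + α i) := by
          ring
  linarith [key.trans hfin]
end

section
/- Let 1 ≤ n−1 < α−1 ≤ n for an integer n ≥ 2, and let f(x) = ‖x‖^α on ℝ^d. Then for all x, y ∈ ℝ^d, ‖∇f(x) − ∇f(y)‖ ≤ (n+5)·α·‖x − y‖^{(α−1)/n} (1 + ‖x‖^{((n−1)(α−1))/n} + ‖y‖^{((n−1)(α−1))/n}). -/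
open Real

-- gradient formula
lemma grad_norm_rpow {d : ℕ} (α : ℝ) (hα : 2 < α) (x : EuclideanSpace ℝ (Fin d)) :
    HasGradientAt (fun z : EuclideanSpace ℝ (Fin d) => ‖z‖ ^ α)
      ((α * ‖x‖ ^ (α - 2)) • x) x := by
  have h1 : HasFDerivAt (fun z : EuclideanSpace ℝ (Fin d) => ‖z‖ ^ 2)
      (2 • (innerSL ℝ x)) x := (hasStrictFDerivAt_norm_sq x).hasFDerivAt
  have h2 : HasDerivAt (fun u : ℝ => u ^ (α / 2))
      ((α / 2) * ((‖x‖ ^ 2 : ℝ)) ^ (α / 2 - 1)) ((‖x‖ ^ 2 : ℝ)) :=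
    Real.hasDerivAt_rpow_const (Or.inr (by linarith))
  have h3 := h2.comp_hasFDerivAt x h1
  have hfun : (fun z : EuclideanSpace ℝ (Fin d) => ((‖z‖ ^ 2 : ℝ)) ^ (α / 2))
      = fun z => ‖z‖ ^ α := by
    funext z
    rw [← Real.rpow_natCast ‖z‖ 2, ← Real.rpow_mul (norm_nonneg z)]
    congr 1
    push_cast
    ring
  have hpow : ((‖x‖ ^ 2 : ℝ)) ^ (α / 2 - 1) = ‖x‖ ^ (α - 2) := by
    rw [← Real.rpow_natCast ‖x‖ 2, ← Real.rpow_mul (norm_nonneg x)]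
    congr 1
    push_cast
    ring
  rw [hasGradientAt_iff_hasFDerivAt]
  rw [← hfun]
  convert h3 using 1
  · rfl
  · rfl
  ext v
  simp [InnerProductSpace.toDual_apply_apply, real_inner_smul_left, hpow]
  ring


-- key scalar inequality: a * (a^β - b^β) ≤ (β+1) * (a^β * (a-b))
lemma rpow_diff_mul_le {a b β : ℝ} (hb : 0 ≤ b) (hba : b ≤ a) (hβ : 0 < β) :
    a * (a ^ β - b ^ β) ≤ (β + 1) * (a ^ β * (a - b)) := by
  have ha : 0 ≤ a := le_trans hb hba
  have haβ : 0 ≤ a ^ β := Real.rpow_nonneg ha β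
  rcases le_or_gt β 1 with hβ1 | hβ1
  · -- β ≤ 1 : use a^β * b ≤ a * b^β
    have key : a ^ β * b ≤ a * b ^ β := by
      rcases eq_or_lt_of_le hb with h0 | hbpos
      · rw [← h0, Real.zero_rpow hβ.ne']
        simp
      · have hapos : 0 < a := lt_of_lt_of_le hbpos hba
        have h1 : b ^ (1 - β) ≤ a ^ (1 - β) :=
          Real.rpow_le_rpow hb hba (by linarith)
        have e1 : a ^ β * (a ^ (1 - β)) = a := by
          rw [← Real.rpow_add hapos]; norm_num
        have e2 : b ^ β * (b ^ (1 - β)) = b := by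
          rw [← Real.rpow_add hbpos]; norm_num
        calc a ^ β * b = a ^ β * (b ^ β * b ^ (1 - β)) := by rw [e2]
          _ ≤ a ^ β * (b ^ β * a ^ (1 - β)) := by
              have hbβ : 0 ≤ b ^ β := Real.rpow_nonneg hb β
              apply mul_le_mul_of_nonneg_left _ haβ
              exact mul_le_mul_of_nonneg_left h1 hbβ
          _ = a ^ β * a ^ (1 - β) * b ^ β := by ring
          _ = a * b ^ β := by rw [e1]
    nlinarith [key, mul_nonneg haβ (sub_nonneg.mpr hba),
      mul_nonneg hβ.le (mul_nonneg haβ (sub_nonneg.mpr hba))]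
  · -- 1 < β : mean value theorem
    rcases eq_or_lt_of_le hba with rfl | hlt
    · simp
    · obtain ⟨c, hc, hslope⟩ := exists_hasDerivAt_eq_slope (fun t : ℝ => t ^ β)
        (fun t : ℝ => β * t ^ (β - 1)) hlt
        (fun t _ => (Real.hasDerivAt_rpow_const (p := β) (Or.inr hβ1.le)).continuousAt.continuousWithinAt)
        (fun t _ => Real.hasDerivAt_rpow_const (Or.inr hβ1.le))
      have hc0 : 0 ≤ c := le_trans hb hc.1.le
      have hca : c ≤ a := hc.2.le
      have h1 : c ^ (β - 1) ≤ a ^ (β - 1) := Real.rpow_le_rpow hc0 hca (by linarith)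
      have hne : a - b ≠ 0 := sub_ne_zero.mpr (ne_of_gt hlt)
      have hd : a ^ β - b ^ β = β * c ^ (β - 1) * (a - b) := by
        rw [eq_div_iff hne] at hslope
        linarith [hslope]
      have hapos : 0 < a := lt_of_le_of_lt hb hlt
      have e1 : a ^ (β - 1) * a = a ^ β := by
        rw [← Real.rpow_add_one hapos.ne' (β - 1)]; norm_num
      calc a * (a ^ β - b ^ β) = β * (c ^ (β - 1) * a) * (a - b) := by rw [hd]; ring
        _ ≤ β * (a ^ (β - 1) * a) * (a - b) := by
            apply mul_le_mul_of_nonneg_right _ (by linarith)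
            apply mul_le_mul_of_nonneg_left _ (by linarith)
            exact mul_le_mul_of_nonneg_right h1 hapos.le
        _ = β * (a ^ β * (a - b)) := by rw [e1]; ring
        _ ≤ (β + 1) * (a ^ β * (a - b)) := by nlinarith


lemma aux_ineq (d n : ℕ) (hn : 2 ≤ n) (α : ℝ)
    (hα1 : (n : ℝ) < α) (hα2 : α ≤ (n : ℝ) + 1)
    (x y : EuclideanSpace ℝ (Fin d)) (hyx : ‖y‖ ≤ ‖x‖) :
    ‖(α * ‖x‖ ^ (α - 2)) • x - (α * ‖y‖ ^ (α - 2)) • y‖ ≤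
      ((n : ℝ) + 5) * α * ‖x - y‖ ^ ((α - 1) / n) *
        (1 + ‖x‖ ^ (((n : ℝ) - 1) * (α - 1) / n) + ‖y‖ ^ (((n : ℝ) - 1) * (α - 1) / n)) := by
  have hn2 : (2 : ℝ) ≤ (n : ℝ) := by exact_mod_cast hn
  have hnpos : (0 : ℝ) < n := by linarith
  have hα2' : (2 : ℝ) < α := lt_of_le_of_lt hn2 hα1
  set a := ‖x‖ with ha_def
  set b := ‖y‖ with hb_def
  set r := ‖x - y‖ with hr_def
  have ha : 0 ≤ a := norm_nonneg x
  have hb : 0 ≤ b := norm_nonneg y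
  have hr : 0 ≤ r := norm_nonneg _
  set t := (α - 1) / (n : ℝ) with ht_def
  set A := ((n : ℝ) - 1) * (α - 1) / (n : ℝ) with hA_def
  have ht0 : 0 < t := div_pos (by linarith) hnpos
  have ht1 : t ≤ 1 := by rw [ht_def, div_le_one hnpos]; linarith
  have hA0 : 0 < A := div_pos (mul_pos (by linarith) (by linarith)) hnpos
  have hAt : A = α - 1 - t := by
    rw [hA_def, ht_def]; field_simp
  have haA : 0 ≤ a ^ A := Real.rpow_nonneg ha A
  have hbA : 0 ≤ b ^ A := Real.rpow_nonneg hb A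
  have hrt : 0 ≤ r ^ t := Real.rpow_nonneg hr t
  have hα0 : 0 < α := by linarith
  rcases le_or_gt a r with hcase | hcase
  · -- ‖x‖ ≤ ‖x - y‖ : trivial bound
    have key : ∀ s : ℝ, 0 ≤ s → s ≤ r → s ^ (α - 2) * s ≤ s ^ A * r ^ t := by
      intro s hs hsr
      rcases eq_or_lt_of_le hs with h0 | hspos
      · rw [← h0, Real.zero_rpow (by linarith : α - 2 ≠ 0),
          Real.zero_rpow hA0.ne']
        simp
      · have e1 : s ^ (α - 2) * s = s ^ (α - 1) := by
          have : α - 1 = (α - 2) + 1 := by ring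
          rw [this, Real.rpow_add_one hspos.ne']
        have e2 : s ^ (α - 1) = s ^ A * s ^ t := by
          rw [← Real.rpow_add hspos]
          congr 1
          rw [hAt]; ring
        rw [e1, e2]
        exact mul_le_mul_of_nonneg_left
          (Real.rpow_le_rpow hs hsr ht0.le) (Real.rpow_nonneg hs A)
    have hxb : ‖(α * a ^ (α - 2)) • x‖ = α * a ^ (α - 2) * a := by
      rw [norm_smul, Real.norm_eq_abs,
        abs_of_nonneg (mul_nonneg hα0.le (Real.rpow_nonneg ha _))]
    have hyb : ‖(α * b ^ (α - 2)) • y‖ = α * b ^ (α - 2) * b := by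
      rw [norm_smul, Real.norm_eq_abs,
        abs_of_nonneg (mul_nonneg hα0.le (Real.rpow_nonneg hb _))]
    have hbr : b ≤ r := le_trans hyx hcase
    have k1 : a ^ (α - 2) * a ≤ a ^ A * r ^ t := key a ha hcase
    have k2 : b ^ (α - 2) * b ≤ b ^ A * r ^ t := key b hb hbr
    calc ‖(α * a ^ (α - 2)) • x - (α * b ^ (α - 2)) • y‖
        ≤ ‖(α * a ^ (α - 2)) • x‖ + ‖(α * b ^ (α - 2)) • y‖ := norm_sub_le _ _
      _ = α * (a ^ (α - 2) * a) + α * (b ^ (α - 2) * b) := by rw [hxb, hyb]; ring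
      _ ≤ α * (a ^ A * r ^ t) + α * (b ^ A * r ^ t) := by
          have := mul_le_mul_of_nonneg_left k1 hα0.le
          have := mul_le_mul_of_nonneg_left k2 hα0.le
          linarith
      _ ≤ ((n : ℝ) + 5) * α * r ^ t * (1 + a ^ A + b ^ A) := by
          nlinarith [mul_nonneg hrt haA, mul_nonneg hrt hbA, hrt,
            mul_nonneg hα0.le hrt,
            mul_nonneg (mul_nonneg hα0.le hrt) haA,
            mul_nonneg (mul_nonneg hα0.le hrt) hbA]
  · -- ‖x - y‖ < ‖x‖
    have hapos : 0 < a := lt_of_le_of_lt hr hcase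
    set β := α - 2 with hβ_def
    have hβ0 : (0 : ℝ) < β := by rw [hβ_def]; linarith
    have haβ : 0 ≤ a ^ β := Real.rpow_nonneg ha β
    have hbβ : 0 ≤ b ^ β := Real.rpow_nonneg hb β
    have hβab : b ^ β ≤ a ^ β := Real.rpow_le_rpow hb hyx hβ0.le
    have hdecomp : (α * a ^ β) • x - (α * b ^ β) • y
        = (α * b ^ β) • (x - y) + ((α * a ^ β) - (α * b ^ β)) • x := by
      module
    have hab_r : a - b ≤ r := norm_sub_norm_le x y
    have hkey : a ^ β * r ≤ a ^ A * r ^ t := by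
      rcases eq_or_lt_of_le hr with h0 | hrpos
      · rw [← h0, Real.zero_rpow ht0.ne']
        simp
      · have e1 : r ^ t * r ^ (1 - t) = r := by
          rw [← Real.rpow_add hrpos]; norm_num
        have e2 : a ^ β * a ^ (1 - t) = a ^ A := by
          rw [← Real.rpow_add hapos]
          congr 1
          rw [hAt, hβ_def]; ring
        have h3 : r ^ (1 - t) ≤ a ^ (1 - t) :=
          Real.rpow_le_rpow hr hcase.le (by linarith)
        calc a ^ β * r = a ^ β * r ^ (1 - t) * r ^ t := by rw [mul_assoc, mul_comm (r ^ (1-t)), e1]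
          _ ≤ a ^ β * a ^ (1 - t) * r ^ t := by
              apply mul_le_mul_of_nonneg_right _ hrt
              exact mul_le_mul_of_nonneg_left h3 haβ
          _ = a ^ A * r ^ t := by rw [e2]
    have hmvt : a * (a ^ β - b ^ β) ≤ (β + 1) * (a ^ β * (a - b)) :=
      rpow_diff_mul_le hb hyx hβ0
    have step1 : ‖(α * a ^ β) • x - (α * b ^ β) • y‖
        ≤ α * (b ^ β * r) + α * ((a ^ β - b ^ β) * a) := by
      rw [hdecomp]
      have n1 : ‖(α * b ^ β) • (x - y)‖ = α * (b ^ β * r) := by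
        rw [norm_smul, Real.norm_eq_abs,
          abs_of_nonneg (mul_nonneg hα0.le hbβ)]
        ring
      have n2 : ‖((α * a ^ β) - (α * b ^ β)) • x‖ = α * ((a ^ β - b ^ β) * a) := by
        rw [norm_smul, Real.norm_eq_abs, abs_of_nonneg (by nlinarith : (0:ℝ) ≤ α * a ^ β - α * b ^ β)]
        ring
      calc ‖(α * b ^ β) • (x - y) + ((α * a ^ β) - (α * b ^ β)) • x‖
          ≤ ‖(α * b ^ β) • (x - y)‖ + ‖((α * a ^ β) - (α * b ^ β)) • x‖ := norm_add_le _ _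
        _ = α * (b ^ β * r) + α * ((a ^ β - b ^ β) * a) := by rw [n1, n2]
    have step2 : α * (b ^ β * r) + α * ((a ^ β - b ^ β) * a)
        ≤ α * ((n : ℝ) + 1) * (a ^ β * r) := by
      have h1 : b ^ β * r ≤ a ^ β * r := mul_le_mul_of_nonneg_right hβab hr
      have h2 : (a ^ β - b ^ β) * a ≤ (β + 1) * (a ^ β * r) := by
        have h3 : (β + 1) * (a ^ β * (a - b)) ≤ (β + 1) * (a ^ β * r) := by
          apply mul_le_mul_of_nonneg_left _ (by linarith)
          exact mul_le_mul_of_nonneg_left hab_r haβ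
        calc (a ^ β - b ^ β) * a = a * (a ^ β - b ^ β) := by ring
          _ ≤ (β + 1) * (a ^ β * (a - b)) := hmvt
          _ ≤ (β + 1) * (a ^ β * r) := h3
      have hβn : β + 2 ≤ (n : ℝ) + 1 := by rw [hβ_def]; linarith
      have hswap : (β + 2) * (a ^ β * r) ≤ ((n : ℝ) + 1) * (a ^ β * r) :=
        mul_le_mul_of_nonneg_right hβn (mul_nonneg haβ hr)
      have core : b ^ β * r + (a ^ β - b ^ β) * a ≤ ((n : ℝ) + 1) * (a ^ β * r) := by
        have e : a ^ β * r + (β + 1) * (a ^ β * r) = (β + 2) * (a ^ β * r) := by ring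
        linarith [h1, h2, e, hswap]
      have l1 := mul_le_mul_of_nonneg_left core hα0.le
      have e2 : α * (b ^ β * r + (a ^ β - b ^ β) * a)
          = α * (b ^ β * r) + α * ((a ^ β - b ^ β) * a) := by ring
      have e3 : α * (((n : ℝ) + 1) * (a ^ β * r)) = α * ((n : ℝ) + 1) * (a ^ β * r) := by ring
      linarith [l1, e2, e3]
    have step3 : α * ((n : ℝ) + 1) * (a ^ β * r)
        ≤ ((n : ℝ) + 5) * α * r ^ t * (1 + a ^ A + b ^ A) := by
      have h1 : α * ((n : ℝ) + 1) * (a ^ β * r) ≤ α * ((n : ℝ) + 1) * (a ^ A * r ^ t) := by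
        apply mul_le_mul_of_nonneg_left hkey
        positivity
      have h2 : ((n : ℝ) + 1) * (a ^ A) ≤ ((n : ℝ) + 5) * (1 + a ^ A + b ^ A) :=
        calc ((n : ℝ) + 1) * (a ^ A) ≤ ((n : ℝ) + 5) * (a ^ A) :=
              mul_le_mul_of_nonneg_right (by linarith) haA
          _ ≤ ((n : ℝ) + 5) * (1 + a ^ A + b ^ A) :=
              mul_le_mul_of_nonneg_left (by linarith) (by linarith)
      calc α * ((n : ℝ) + 1) * (a ^ β * r)
          ≤ α * ((n : ℝ) + 1) * (a ^ A * r ^ t) := h1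
        _ = ((n : ℝ) + 1) * (a ^ A) * (α * r ^ t) := by ring
        _ ≤ ((n : ℝ) + 5) * (1 + a ^ A + b ^ A) * (α * r ^ t) :=
            mul_le_mul_of_nonneg_right h2 (mul_nonneg hα0.le hrt)
        _ = ((n : ℝ) + 5) * α * r ^ t * (1 + a ^ A + b ^ A) := by ring
    calc ‖(α * a ^ β) • x - (α * b ^ β) • y‖
        ≤ α * (b ^ β * r) + α * ((a ^ β - b ^ β) * a) := step1
      _ ≤ α * ((n : ℝ) + 1) * (a ^ β * r) := step2
      _ ≤ ((n : ℝ) + 5) * α * r ^ t * (1 + a ^ A + b ^ A) := step3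


/-- `f(x) = ‖x‖^α` is `(α-1)/n`-locally smooth for `n < α ≤ n+1`,
`n ≥ 2`. -/
theorem norm_rpow_locally_smooth
    (d n : ℕ) (hd : 0 < d) (hn : 2 ≤ n) (α : ℝ)
    (hα1 : (n : ℝ) < α) (hα2 : α ≤ (n : ℝ) + 1) :
    ∀ x y : EuclideanSpace ℝ (Fin d),
      ‖gradient (fun z : EuclideanSpace ℝ (Fin d) => ‖z‖ ^ α) x -
        gradient (fun z : EuclideanSpace ℝ (Fin d) => ‖z‖ ^ α) y‖ ≤
      ((n : ℝ) + 5) * α * ‖x - y‖ ^ ((α - 1) / n) *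
        (1 + ‖x‖ ^ (((n : ℝ) - 1) * (α - 1) / n) + ‖y‖ ^ (((n : ℝ) - 1) * (α - 1) / n)) := by
  intro x y
  have hn2 : (2 : ℝ) ≤ (n : ℝ) := by exact_mod_cast hn
  have hα2' : (2 : ℝ) < α := lt_of_le_of_lt hn2 hα1
  rw [(grad_norm_rpow α hα2' x).gradient, (grad_norm_rpow α hα2' y).gradient]
  rcases le_total ‖y‖ ‖x‖ with h | h
  · exact aux_ineq d n hn α hα1 hα2 x y h
  · have h1 := aux_ineq d n hn α hα1 hα2 y x h
    rw [norm_sub_rev ((α * ‖x‖ ^ (α - 2)) • x)]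
    rw [norm_sub_rev y x] at h1
    calc ‖(α * ‖y‖ ^ (α - 2)) • y - (α * ‖x‖ ^ (α - 2)) • x‖
        ≤ ((n : ℝ) + 5) * α * ‖x - y‖ ^ ((α - 1) / n) *
          (1 + ‖y‖ ^ (((n : ℝ) - 1) * (α - 1) / n) + ‖x‖ ^ (((n : ℝ) - 1) * (α - 1) / n)) := h1
      _ = ((n : ℝ) + 5) * α * ‖x - y‖ ^ ((α - 1) / n) *
          (1 + ‖x‖ ^ (((n : ℝ) - 1) * (α - 1) / n) + ‖y‖ ^ (((n : ℝ) - 1) * (α - 1) / n)) := by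
          ring
end

section
/- Suppose U : ℝ^d → ℝ is differentiable and satisfies ⟨∇U(x), x⟩ ≥ a‖x‖^β − b for all x (β-dissipativity with a, b > 0, β > 0), and that ‖∇U(x) − ∇U(y)‖ ≤ ∑_i L_i ‖x−y‖^{α_i} with ∇U(0)=0 and all α_i ≤ 1, L_i ≤ L. Then for all x ∈ ℝ^d, U(x) ≥ (a/(2β)) ‖x‖^β + U(0) − (L/(α₁+1)) ∑_i R^{α_i+1} − b/β, where R = (2b/a)^{1/β}. -/
set_option maxHeartbeats 1000000


open Real

/-- a lower bound on the potential under β-dissipativity and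
α-mixture weak smoothness, with `R = (2b/a)^(1/β)`. -/
theorem dissipative_potential_lower_bound
    (d N : ℕ) (hd : 0 < d) (hN : 0 < N)
    (U : EuclideanSpace ℝ (Fin d) → ℝ) (hU : ContDiff ℝ 1 U)
    (a b β : ℝ) (ha : 0 < a) (hb : 0 < b) (hβ : 0 < β)
    (hdiss : ∀ x, (inner ℝ (gradient U x) x : ℝ) ≥ a * ‖x‖ ^ β - b)
    (α : Fin N → ℝ) (hα0 : ∀ i, 0 < α i) (hα1 : ∀ i, α i ≤ 1) (hαmono : Monotone α)
    (L : Fin N → ℝ) (Lmax : ℝ) (hLpos : ∀ i, 0 < L i) (hLle : ∀ i, L i ≤ Lmax)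
    (hsmooth : ∀ x y, ‖gradient U x - gradient U y‖ ≤ ∑ i, L i * ‖x - y‖ ^ (α i))
    (hstat : gradient U 0 = 0) :
    ∀ x, U x ≥ a / (2 * β) * ‖x‖ ^ β + U 0 -
      (Lmax / (α ⟨0, hN⟩ + 1)) * (∑ i, ((2 * b / a) ^ (1 / β)) ^ (α i + 1)) - b / β := by
  intro x
  set α₀ : ℝ := α ⟨0, hN⟩ with hα₀def
  have hα₀pos : 0 < α₀ := hα0 _
  have hα₀le : ∀ i, α₀ ≤ α i := fun i => hαmono (Fin.mk_le_mk.mpr (Nat.zero_le _))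
  have hLmax : 0 < Lmax := lt_of_lt_of_le (hLpos ⟨0, hN⟩) (hLle _)
  set R : ℝ := (2 * b / a) ^ (1 / β) with hRdef
  have hRpos : 0 < R := Real.rpow_pos_of_pos (by positivity) _
  have hRβ : R ^ β = 2 * b / a := by
    rw [hRdef, ← Real.rpow_mul (by positivity), one_div, inv_mul_cancel₀ hβ.ne',
      Real.rpow_one]
  have hCpos : 0 < (Lmax / (α₀ + 1)) * (∑ i, R ^ (α i + 1)) := by
    apply mul_pos (by positivity)
    apply Finset.sum_pos (fun i _ => Real.rpow_pos_of_pos hRpos _)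
    exact ⟨⟨0, hN⟩, Finset.mem_univ _⟩
  rcases eq_or_ne x 0 with rfl | hx0
  · have h0 : (0 : ℝ) ^ β = 0 := Real.zero_rpow hβ.ne'
    simp only [norm_zero, h0, ge_iff_le]
    nlinarith [div_pos hb hβ]
  have hxpos : (0 : ℝ) < ‖x‖ := norm_pos_iff.mpr hx0
  -- the derivative along the segment
  have hdiff : Differentiable ℝ U := hU.differentiable one_ne_zero
  have hφderiv : ∀ t : ℝ,
      HasDerivAt (fun s : ℝ => U (s • x)) ((inner ℝ (gradient U (t • x)) x : ℝ)) t := by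
    intro t
    have h1 : HasFDerivAt U (InnerProductSpace.toDual ℝ _ (gradient U (t • x))) (t • x) :=
      (hdiff (t • x)).hasGradientAt.hasFDerivAt
    have h2 : HasDerivAt (fun s : ℝ => s • x) x t := by
      simpa using (hasDerivAt_id t).smul_const x
    have h3 := h1.comp_hasDerivAt t h2
    rw [InnerProductSpace.toDual_apply_apply] at h3
    exact h3
  have hgradcont : Continuous (gradient U) := by
    have : Continuous (fderiv ℝ U) := hU.continuous_fderiv one_ne_zero
    exact ((InnerProductSpace.toDual ℝ _).symm.continuous.comp this)
  have hφcont : Continuous (fun t : ℝ => (inner ℝ (gradient U (t • x)) x : ℝ)) := by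
    exact (hgradcont.comp (continuous_id.smul continuous_const)).inner continuous_const
  have hφint : ∀ u v : ℝ, IntervalIntegrable
      (fun t : ℝ => (inner ℝ (gradient U (t • x)) x : ℝ)) MeasureTheory.volume u v :=
    fun u v => hφcont.intervalIntegrable u v
  have hFTC : ∀ u v : ℝ, U (v • x) - U (u • x) =
      ∫ t in u..v, (inner ℝ (gradient U (t • x)) x : ℝ) := by
    intro u v
    exact (intervalIntegral.integral_eq_sub_of_hasDerivAt (fun t _ => hφderiv t)
      (hφint u v)).symm
  -- the split point
  set t₀ : ℝ := if ‖x‖ ≤ R then 1 else R / ‖x‖ with ht₀def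
  have ht₀pos : 0 < t₀ := by
    rw [ht₀def]; split
    · exact one_pos
    · positivity
  have ht₀le1 : t₀ ≤ 1 := by
    rw [ht₀def]; split
    · exact le_refl 1
    · exact le_of_lt ((div_lt_one hxpos).mpr (lt_of_not_ge (by assumption)))
  have ht₀R : ‖x‖ * t₀ ≤ R := by
    rw [ht₀def]; split
    · simpa using ‹‖x‖ ≤ R›
    · rw [mul_div_cancel₀ _ hxpos.ne']
  -- pointwise bound near the origin
  have hbound1 : ∀ t ∈ Set.Icc (0 : ℝ) t₀,
      -(∑ i, L i * ‖x‖ ^ (α i + 1) * t ^ (α i)) ≤ (inner ℝ (gradient U (t • x)) x : ℝ) := by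
    intro t ht
    have htnn : 0 ≤ t := ht.1
    have hng : ‖gradient U (t • x)‖ ≤ ∑ i, L i * (t * ‖x‖) ^ (α i) := by
      have := hsmooth (t • x) 0
      rw [hstat, sub_zero, sub_zero] at this
      simpa [norm_smul, abs_of_nonneg htnn] using this
    have h1 : -(‖gradient U (t • x)‖ * ‖x‖) ≤ (inner ℝ (gradient U (t • x)) x : ℝ) := by
      have h2 := abs_real_inner_le_norm (gradient U (t • x)) x
      linarith [neg_abs_le ((inner ℝ (gradient U (t • x)) x : ℝ))]
    refine le_trans ?_ h1
    rw [neg_le_neg_iff]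
    calc ‖gradient U (t • x)‖ * ‖x‖ ≤ (∑ i, L i * (t * ‖x‖) ^ (α i)) * ‖x‖ :=
          mul_le_mul_of_nonneg_right hng hxpos.le
      _ = ∑ i, L i * ‖x‖ ^ (α i + 1) * t ^ (α i) := by
          rw [Finset.sum_mul]
          refine Finset.sum_congr rfl fun i _ => ?_
          rw [Real.mul_rpow htnn hxpos.le, Real.rpow_add hxpos, Real.rpow_one]
          ring
  -- integrability of the minorant
  have hψint : IntervalIntegrable
      (fun t : ℝ => -(∑ i, L i * ‖x‖ ^ (α i + 1) * t ^ (α i))) MeasureTheory.volume 0 t₀ := by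
    apply IntervalIntegrable.neg
    have h := IntervalIntegrable.sum (μ := MeasureTheory.volume) (a := (0:ℝ)) (b := t₀)
      Finset.univ (f := fun (i : Fin N) (t : ℝ) => L i * ‖x‖ ^ (α i + 1) * t ^ (α i))
      (fun i _ => (intervalIntegral.intervalIntegrable_rpow (Or.inl (hα0 i).le)).const_mul _)
    have heq : (fun t : ℝ => ∑ i, L i * ‖x‖ ^ (α i + 1) * t ^ (α i)) =
        ∑ i : Fin N, fun t : ℝ => L i * ‖x‖ ^ (α i + 1) * t ^ (α i) := by
      funext t; simp
    rw [heq]; exact h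
  -- first-piece integral bound
  have key1 : -((Lmax / (α₀ + 1)) * (∑ i, R ^ (α i + 1))) ≤
      ∫ t in (0 : ℝ)..t₀, (inner ℝ (gradient U (t • x)) x : ℝ) := by
    have hle := intervalIntegral.integral_mono_on ht₀pos.le hψint (hφint 0 t₀) hbound1
    refine le_trans ?_ hle
    rw [intervalIntegral.integral_neg, neg_le_neg_iff]
    have heval : (∫ t in (0 : ℝ)..t₀, ∑ i, L i * ‖x‖ ^ (α i + 1) * t ^ (α i)) =
        ∑ i, L i * ‖x‖ ^ (α i + 1) * (t₀ ^ (α i + 1) / (α i + 1)) := by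
      rw [intervalIntegral.integral_finset_sum]
      · refine Finset.sum_congr rfl fun i _ => ?_
        rw [intervalIntegral.integral_const_mul, integral_rpow (Or.inl (by linarith [hα0 i]))]
        rw [Real.zero_rpow (ne_of_gt (by linarith [hα0 i]))]
        ring
      · intro i _
        exact (intervalIntegral.intervalIntegrable_rpow (Or.inl (hα0 i).le)).const_mul _
    rw [heval, Finset.mul_sum]
    refine Finset.sum_le_sum fun i _ => ?_
    have h1 : ‖x‖ ^ (α i + 1) * t₀ ^ (α i + 1) ≤ R ^ (α i + 1) := by
      rw [← Real.mul_rpow hxpos.le ht₀pos.le]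
      exact Real.rpow_le_rpow (mul_nonneg hxpos.le ht₀pos.le) ht₀R (by linarith [hα0 i])
    have h2 : (0:ℝ) < α i + 1 := by linarith [hα0 i]
    have h3 : α₀ + 1 ≤ α i + 1 := by linarith [hα₀le i]
    calc L i * ‖x‖ ^ (α i + 1) * (t₀ ^ (α i + 1) / (α i + 1))
        = L i * (‖x‖ ^ (α i + 1) * t₀ ^ (α i + 1)) / (α i + 1) := by ring
      _ ≤ Lmax * R ^ (α i + 1) / (α₀ + 1) := by
          apply div_le_div₀ (mul_nonneg hLmax.le (Real.rpow_pos_of_pos hRpos _).le) ?_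
            (by linarith) h3
          refine mul_le_mul (hLle i) h1 ?_ hLmax.le
          exact mul_nonneg (Real.rpow_nonneg hxpos.le _) (Real.rpow_nonneg ht₀pos.le _)
      _ = Lmax / (α₀ + 1) * R ^ (α i + 1) := by ring
  -- second-piece integral bound
  have key2 : a / (2 * β) * ‖x‖ ^ β - b / β ≤
      ∫ t in t₀..(1 : ℝ), (inner ℝ (gradient U (t • x)) x : ℝ) := by
    by_cases hcase : ‖x‖ ≤ R
    · -- small x : the integral is zero and the LHS is nonpositive
      have ht₀1 : t₀ = 1 := by rw [ht₀def, if_pos hcase]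
      rw [ht₀1, intervalIntegral.integral_same]
      have hxβ : ‖x‖ ^ β ≤ 2 * b / a := by
        rw [← hRβ]
        exact Real.rpow_le_rpow hxpos.le hcase hβ.le
      rw [sub_nonpos]
      rw [div_mul_eq_mul_div, div_le_div_iff₀ (by positivity) hβ]
      calc a * ‖x‖ ^ β * β ≤ a * (2 * b / a) * β := by
            have := mul_le_mul_of_nonneg_left hxβ ha.le
            nlinarith
        _ = b * (2 * β) := by field_simp
    · -- large x
      push_neg at hcase
      have ht₀eq : t₀ = R / ‖x‖ := by rw [ht₀def, if_neg (not_le.mpr hcase)]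
      have hxt₀ : ‖x‖ * t₀ = R := by rw [ht₀eq, mul_div_cancel₀ _ hxpos.ne']
      have hbound2 : ∀ t ∈ Set.Icc t₀ (1:ℝ),
          a / 2 * ‖x‖ ^ β * t ^ (β - 1) ≤ (inner ℝ (gradient U (t • x)) x : ℝ) := by
        intro t ht
        have htpos : 0 < t := lt_of_lt_of_le ht₀pos ht.1
        have hnorm : ‖t • x‖ = t * ‖x‖ := by
          rw [norm_smul, Real.norm_eq_abs, abs_of_nonneg htpos.le]
        have hRle : R ≤ t * ‖x‖ := by
          rw [← hxt₀]
          calc ‖x‖ * t₀ ≤ ‖x‖ * t := mul_le_mul_of_nonneg_left ht.1 hxpos.le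
            _ = t * ‖x‖ := mul_comm _ _
        have hblt : 2 * b ≤ a * (t * ‖x‖) ^ β := by
          have h1 : R ^ β ≤ (t * ‖x‖) ^ β := Real.rpow_le_rpow hRpos.le hRle hβ.le
          have := mul_le_mul_of_nonneg_left h1 ha.le
          rw [hRβ, mul_div_cancel₀ _ ha.ne'] at this
          linarith
        have hd1 : a * (t * ‖x‖) ^ β - b ≤ (inner ℝ (gradient U (t • x)) (t • x) : ℝ) := by
          have := hdiss (t • x)
          rwa [hnorm] at this
        have hd2 : (inner ℝ (gradient U (t • x)) (t • x) : ℝ) =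
            t * (inner ℝ (gradient U (t • x)) x : ℝ) := real_inner_smul_right _ _ _
        have hd3 : a / 2 * (t * ‖x‖) ^ β ≤ t * (inner ℝ (gradient U (t • x)) x : ℝ) := by
          rw [← hd2]; linarith
        have htβ : (t * ‖x‖) ^ β = t ^ β * ‖x‖ ^ β := Real.mul_rpow htpos.le hxpos.le
        rw [htβ] at hd3
        have htβ1 : t ^ (β - 1) = t ^ β / t := by
          rw [Real.rpow_sub htpos, Real.rpow_one]
        have h4 : a / 2 * ‖x‖ ^ β * (t ^ β / t) = (a / 2 * (t ^ β * ‖x‖ ^ β)) / t := by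
          ring
        rw [htβ1, h4, div_le_iff₀ htpos]
        nlinarith [hd3]
      have hχint : IntervalIntegrable (fun t : ℝ => a / 2 * ‖x‖ ^ β * t ^ (β - 1))
          MeasureTheory.volume t₀ 1 := by
        apply IntervalIntegrable.const_mul
        apply intervalIntegral.intervalIntegrable_rpow
        right
        rw [Set.uIcc_of_le ht₀le1]
        intro hmem
        exact absurd hmem.1 (not_le.mpr ht₀pos)
      have hle := intervalIntegral.integral_mono_on ht₀le1 hχint (hφint t₀ 1) hbound2
      refine le_trans ?_ hle
      rw [intervalIntegral.integral_const_mul,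
        integral_rpow (Or.inl (by linarith : (-1:ℝ) < β - 1))]
      have h1 : (1:ℝ) ^ (β - 1 + 1) = 1 := Real.one_rpow _
      have h2 : t₀ ^ (β - 1 + 1) = t₀ ^ β := by norm_num
      rw [h1, h2]
      have h3 : ‖x‖ ^ β * t₀ ^ β = 2 * b / a := by
        rw [← Real.mul_rpow hxpos.le ht₀pos.le, hxt₀, hRβ]
      have hβ1 : β - 1 + 1 = β := by ring
      rw [hβ1]
      have : a / 2 * ‖x‖ ^ β * ((1 - t₀ ^ β) / β) =
          a / (2 * β) * ‖x‖ ^ β - a / (2 * β) * (‖x‖ ^ β * t₀ ^ β) := by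
        field_simp
      rw [this, h3]
      have : a / (2 * β) * (2 * b / a) = b / β := by
        field_simp
      rw [this]
  -- assemble
  have hsplit : U x - U 0 =
      (∫ t in (0:ℝ)..t₀, (inner ℝ (gradient U (t • x)) x : ℝ)) +
      (∫ t in t₀..(1:ℝ), (inner ℝ (gradient U (t • x)) x : ℝ)) := by
    rw [intervalIntegral.integral_add_adjacent_intervals (hφint 0 t₀) (hφint t₀ 1)]
    have := hFTC 0 1
    simpa using this
  have := add_le_add key1 key2
  rw [← hsplit] at this
  linarith
end

section
/- (Wasserstein–Fisher bound under Poincaré) Let ν satisfy a Poincaré inequality with constant γ > 0 and let μ ≪ ν have smooth density. Then for any q ≥ 1, W_q(μ, ν) ≤ 2 M_{2q}(μ+ν)^{1/(2q)} γ^{−1/(2q)} I(μ|ν)^{1/(2q)}, where M_s(g) = ∫ g(x)(1+‖x‖²)^{s/2} dx and W_q is the L_q-Wasserstein distance. -/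
open MeasureTheory Real

/-- The `L_q`-Wasserstein distance, defined as an infimum over couplings. -/
noncomputable def wassersteinDist (d : ℕ) (q : ℝ)
    (μ ν : Measure (EuclideanSpace ℝ (Fin d))) : ℝ :=
  sInf { r : ℝ |
    ∃ cpl : Measure (EuclideanSpace ℝ (Fin d) × EuclideanSpace ℝ (Fin d)),
      cpl.map Prod.fst = μ ∧ cpl.map Prod.snd = ν ∧
      r = (∫ z, ‖z.1 - z.2‖ ^ q ∂cpl) ^ (1 / q) }


lemma grad_sqrt_ratio {d : ℕ} (nu mu : EuclideanSpace ℝ (Fin d) → ℝ)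
    (hnuC : ContDiff ℝ 1 nu) (hmuC : ContDiff ℝ 1 mu)
    (hnupos : ∀ x, 0 < nu x) (hmupos : ∀ x, 0 < mu x) :
    ContDiff ℝ 1 (fun x => Real.sqrt (mu x / nu x)) ∧
    ∀ x, ‖gradient (fun x => Real.sqrt (mu x / nu x)) x‖
      = Real.sqrt (mu x / nu x) / 2 *
        ‖gradient (fun y => Real.log (mu y / nu y)) x‖ := by
  have hrpos : ∀ x, 0 < mu x / nu x := fun x => div_pos (hmupos x) (hnupos x)
  have hrC : ContDiff ℝ 1 (fun x => mu x / nu x) :=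
    hmuC.div hnuC (fun x => (hnupos x).ne')
  have hgeq : (fun x : EuclideanSpace ℝ (Fin d) => Real.sqrt (mu x / nu x))
      = fun x => Real.exp (Real.log (mu x / nu x) / 2) := by
    funext x
    rw [Real.sqrt_eq_rpow, Real.rpow_def_of_pos (hrpos x)]
    ring_nf
  have hhd : ∀ x, HasFDerivAt (fun y => Real.log (mu y / nu y))
      (fderiv ℝ (fun y => Real.log (mu y / nu y)) x) x := by
    intro x
    have : DifferentiableAt ℝ (fun y => Real.log (mu y / nu y)) x :=
      ((hrC.differentiable one_ne_zero x).log (hrpos x).ne')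
    exact this.hasFDerivAt
  have hgd : ∀ x, HasFDerivAt (fun x => Real.sqrt (mu x / nu x))
      (Real.exp (Real.log (mu x / nu x) / 2) •
        ((2:ℝ)⁻¹ • fderiv ℝ (fun y => Real.log (mu y / nu y)) x)) x := by
    intro x
    rw [hgeq]
    have h1 := ((hhd x).mul_const (2:ℝ)⁻¹).exp
    simp only [div_eq_mul_inv]
    simpa only [div_eq_mul_inv] using h1
  constructor
  · rw [hgeq]
    exact (contDiff_exp.comp ((hrC.log (fun x => (hrpos x).ne')).div_const 2))
  · intro x
    unfold gradient
    rw [(hgd x).fderiv]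
    rw [LinearIsometryEquiv.norm_map, LinearIsometryEquiv.norm_map, norm_smul, norm_smul]
    simp only [Real.norm_eq_abs]
    rw [abs_of_pos (Real.exp_pos _), abs_of_pos (by norm_num : (0:ℝ) < 2⁻¹)]
    have : Real.exp (Real.log (mu x / nu x) / 2) = Real.sqrt (mu x / nu x) := by
      rw [Real.sqrt_eq_rpow, Real.rpow_def_of_pos (hrpos x)]
      ring_nf
    rw [this]; ring

lemma hellinger_bound {d : ℕ} (γ : ℝ) (hγ : 0 < γ)
    (nu mu : EuclideanSpace ℝ (Fin d) → ℝ)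
    (hnuC : ContDiff ℝ 1 nu) (hmuC : ContDiff ℝ 1 mu)
    (hnupos : ∀ x, 0 < nu x) (hmupos : ∀ x, 0 < mu x)
    (hnuprob : ∫ x, nu x = 1) (hmuprob : ∫ x, mu x = 1)
    (hPI : ∀ g : EuclideanSpace ℝ (Fin d) → ℝ, ContDiff ℝ 1 g →
      Integrable (fun x => nu x * g x ^ 2) →
      Integrable (fun x => nu x * g x) →
      Integrable (fun x => nu x * ‖gradient g x‖ ^ 2) →
      (∫ x, nu x * g x ^ 2) - (∫ x, nu x * g x) ^ 2 ≤
        (1 / γ) * ∫ x, nu x * ‖gradient g x‖ ^ 2)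
    (hFI : Integrable (fun x =>
      mu x * ‖gradient (fun y => Real.log (mu y / nu y)) x‖ ^ 2)) :
    ∫ x, (Real.sqrt (mu x) - Real.sqrt (nu x)) ^ 2 ≤
      1 / (2 * γ) * ∫ x, mu x * ‖gradient (fun y => Real.log (mu y / nu y)) x‖ ^ 2 := by
  have hmuInt : Integrable mu := by
    by_contra h
    rw [integral_undef h] at hmuprob; norm_num at hmuprob
  have hnuInt : Integrable nu := by
    by_contra h
    rw [integral_undef h] at hnuprob; norm_num at hnuprob
  obtain ⟨hgC, hgrad⟩ := grad_sqrt_ratio nu mu hnuC hmuC hnupos hmupos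
  set g : EuclideanSpace ℝ (Fin d) → ℝ := fun x => Real.sqrt (mu x / nu x) with hg
  set h : EuclideanSpace ℝ (Fin d) → ℝ := fun y => Real.log (mu y / nu y) with hh
  have hrpos : ∀ x, 0 < mu x / nu x := fun x => div_pos (hmupos x) (hnupos x)
  have e1 : ∀ x, nu x * g x ^ 2 = mu x := by
    intro x
    rw [hg]
    rw [Real.sq_sqrt (hrpos x).le, mul_comm, div_mul_cancel₀ _ (hnupos x).ne']
  have e2 : ∀ x, nu x * g x = Real.sqrt (mu x * nu x) := by
    intro x
    rw [hg]
    rw [show mu x * nu x = (mu x / nu x) * nu x ^ 2 by field_simp [(hnupos x).ne'],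
      Real.sqrt_mul (hrpos x).le, Real.sqrt_sq (hnupos x).le]
    ring
  have e3 : ∀ x, nu x * ‖gradient g x‖ ^ 2 = 4⁻¹ * (mu x * ‖gradient h x‖ ^ 2) := by
    intro x
    rw [hgrad x, mul_pow, div_pow, Real.sq_sqrt (hrpos x).le]
    field_simp [(hnupos x).ne']
    ring
  have i1 : Integrable (fun x => nu x * g x ^ 2) := by
    have : (fun x => nu x * g x ^ 2) = mu := funext e1
    rw [this]; exact hmuInt
  have hgcont : Continuous g :=
    Real.continuous_sqrt.comp ((hmuC.continuous).div (hnuC.continuous) (fun x => (hnupos x).ne'))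
  have i2 : Integrable (fun x => nu x * g x) := by
    refine Integrable.mono ((hmuInt.add hnuInt).div_const 2)
      ((hnuC.continuous.mul hgcont).aestronglyMeasurable) ?_
    filter_upwards with x
    simp only [Pi.add_apply]
    rw [Real.norm_eq_abs, Real.norm_eq_abs, e2 x]
    rw [abs_of_nonneg (Real.sqrt_nonneg _),
      abs_of_nonneg (by linarith [(hmupos x).le, (hnupos x).le] : (0:ℝ) ≤ (mu x + nu x) / 2)]
    nlinarith [sq_nonneg (Real.sqrt (mu x) - Real.sqrt (nu x)),
      Real.sq_sqrt (hmupos x).le, Real.sq_sqrt (hnupos x).le,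
      Real.sqrt_mul (hmupos x).le (nu x), Real.sqrt_nonneg (mu x * nu x)]
  have i3 : Integrable (fun x => nu x * ‖gradient g x‖ ^ 2) := by
    have : (fun x => nu x * ‖gradient g x‖ ^ 2)
        = fun x => 4⁻¹ * (mu x * ‖gradient h x‖ ^ 2) := funext e3
    rw [this]
    exact hFI.const_mul _
  have hpi := hPI g hgC i1 i2 i3
  rw [show (∫ x, nu x * g x ^ 2) = ∫ x, mu x from integral_congr_ae
    (Filter.Eventually.of_forall e1), hmuprob] at hpi
  rw [show (∫ x, nu x * ‖gradient g x‖ ^ 2)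
      = ∫ x, 4⁻¹ * (mu x * ‖gradient h x‖ ^ 2) from integral_congr_ae
    (Filter.Eventually.of_forall e3), integral_const_mul] at hpi
  rw [show (∫ x, nu x * g x) = ∫ x, Real.sqrt (mu x * nu x) from integral_congr_ae
    (Filter.Eventually.of_forall e2)] at hpi
  set a : ℝ := ∫ x, Real.sqrt (mu x * nu x) with ha
  set I : ℝ := ∫ x, mu x * ‖gradient h x‖ ^ 2 with hI
  have haInt : Integrable (fun x => Real.sqrt (mu x * nu x)) := by
    have : (fun x => Real.sqrt (mu x * nu x)) = fun x => nu x * g x :=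
      funext (fun x => (e2 x).symm)
    rw [this]; exact i2
  have hIsplit : ∫ x, (Real.sqrt (mu x) - Real.sqrt (nu x)) ^ 2 = 2 - 2 * a := by
    have ptw : ∀ x, (Real.sqrt (mu x) - Real.sqrt (nu x)) ^ 2
        = (mu x + nu x) - 2 * Real.sqrt (mu x * nu x) := by
      intro x
      rw [Real.sqrt_mul (hmupos x).le]
      nlinarith [Real.sq_sqrt (hmupos x).le, Real.sq_sqrt (hnupos x).le]
    have hsum : Integrable (fun x => mu x + nu x) := hmuInt.add hnuInt
    rw [integral_congr_ae (Filter.Eventually.of_forall ptw),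
      integral_sub hsum (haInt.const_mul 2),
      integral_add hmuInt hnuInt, hmuprob, hnuprob, integral_const_mul]
    ring
  rw [hIsplit]
  have ha0 : 0 ≤ a := integral_nonneg (fun x => Real.sqrt_nonneg _)
  have hI0 : 0 ≤ I := integral_nonneg (fun x => mul_nonneg (hmupos x).le (by positivity))
  have h4 : γ * (1 - a ^ 2) ≤ 4⁻¹ * I := by
    have := mul_le_mul_of_nonneg_left hpi hγ.le
    calc γ * (1 - a ^ 2) ≤ γ * (1 / γ * (4⁻¹ * I)) := this
      _ = 4⁻¹ * I := by field_simp
  rw [show (1 : ℝ) / (2 * γ) * I = I / (2 * γ) by ring, le_div_iff₀ (by positivity)]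
  rcases le_or_gt a 1 with hc | hc
  · nlinarith
  · nlinarith


lemma cs_bound {d : ℕ} (q : ℝ) (hq : 1 ≤ q)
    (nu mu : EuclideanSpace ℝ (Fin d) → ℝ)
    (hnuC : ContDiff ℝ 1 nu) (hmuC : ContDiff ℝ 1 mu)
    (hnupos : ∀ x, 0 < nu x) (hmupos : ∀ x, 0 < mu x)
    (hmuInt : Integrable mu) (hnuInt : Integrable nu)
    (hM : Integrable (fun x => (mu x + nu x) * (1 + ‖x‖ ^ 2) ^ q)) :
    ∫ x, ‖x‖ ^ q * |mu x - nu x| ≤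
      (2 * ∫ x, (mu x + nu x) * (1 + ‖x‖ ^ 2) ^ q) ^ ((1:ℝ)/2) *
      (∫ x, (Real.sqrt (mu x) - Real.sqrt (nu x)) ^ 2) ^ ((1:ℝ)/2) := by
  set u : EuclideanSpace ℝ (Fin d) → ℝ :=
    fun x => ‖x‖ ^ q * (Real.sqrt (mu x) + Real.sqrt (nu x)) with hu
  set v : EuclideanSpace ℝ (Fin d) → ℝ :=
    fun x => |Real.sqrt (mu x) - Real.sqrt (nu x)| with hv
  have hucont : Continuous u := by
    apply Continuous.mul
    · exact (continuous_norm).rpow_const (fun x => Or.inr (by linarith))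
    · exact (Real.continuous_sqrt.comp hmuC.continuous).add
        (Real.continuous_sqrt.comp hnuC.continuous)
  have hvcont : Continuous v := by
    apply Continuous.abs
    exact (Real.continuous_sqrt.comp hmuC.continuous).sub
      (Real.continuous_sqrt.comp hnuC.continuous)
  have hu0 : ∀ x, 0 ≤ u x := fun x => mul_nonneg (by positivity)
    (by positivity)
  have hv0 : ∀ x, 0 ≤ v x := fun x => abs_nonneg _
  -- pointwise squared bounds
  have husq : ∀ x, u x ^ 2 ≤ 2 * ((mu x + nu x) * (1 + ‖x‖ ^ 2) ^ q) := by
    intro x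
    have h1 : (‖x‖ ^ q) ^ 2 ≤ (1 + ‖x‖ ^ 2) ^ q := by
      rw [← Real.rpow_natCast (‖x‖ ^ q) 2, ← Real.rpow_mul (norm_nonneg x),
        show q * (2:ℕ) = (2:ℝ) * q by push_cast; ring,
        Real.rpow_mul (norm_nonneg x), Real.rpow_two]
      exact Real.rpow_le_rpow (by positivity) (by linarith [sq_nonneg ‖x‖]) (by linarith)
    have h2 : (Real.sqrt (mu x) + Real.sqrt (nu x)) ^ 2 ≤ 2 * (mu x + nu x) := by
      nlinarith [sq_nonneg (Real.sqrt (mu x) - Real.sqrt (nu x)),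
        Real.sq_sqrt (hmupos x).le, Real.sq_sqrt (hnupos x).le]
    calc u x ^ 2 = (‖x‖ ^ q) ^ 2 * (Real.sqrt (mu x) + Real.sqrt (nu x)) ^ 2 := by
          rw [hu]; ring
      _ ≤ (1 + ‖x‖ ^ 2) ^ q * (2 * (mu x + nu x)) := by
          apply mul_le_mul h1 h2 (by positivity) (by positivity)
      _ = 2 * ((mu x + nu x) * (1 + ‖x‖ ^ 2) ^ q) := by ring
  have hvsq : ∀ x, v x ^ 2 ≤ mu x + nu x := by
    intro x
    rw [hv, sq_abs]
    nlinarith [Real.sq_sqrt (hmupos x).le, Real.sq_sqrt (hnupos x).le,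
      Real.sqrt_nonneg (mu x), Real.sqrt_nonneg (nu x),
      mul_nonneg (Real.sqrt_nonneg (mu x)) (Real.sqrt_nonneg (nu x))]
  have huInt2 : Integrable (fun x => u x ^ 2) := by
    refine Integrable.mono (hM.const_mul 2) ((hucont.pow 2).aestronglyMeasurable) ?_
    filter_upwards with x
    rw [Real.norm_eq_abs, Real.norm_eq_abs, abs_of_nonneg (by positivity : (0:ℝ) ≤ u x ^ 2)]
    refine (husq x).trans (le_abs_self _)
  have hvInt2 : Integrable (fun x => v x ^ 2) := by
    refine Integrable.mono (hmuInt.add hnuInt) ((hvcont.pow 2).aestronglyMeasurable) ?_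
    filter_upwards with x
    rw [Real.norm_eq_abs, Real.norm_eq_abs, abs_of_nonneg (by positivity : (0:ℝ) ≤ v x ^ 2)]
    refine (hvsq x).trans (le_abs_self _)
  have huLp : MemLp u (ENNReal.ofReal 2) := by
    rw [show ENNReal.ofReal 2 = 2 by norm_num]
    exact (memLp_two_iff_integrable_sq hucont.aestronglyMeasurable).mpr huInt2
  have hvLp : MemLp v (ENNReal.ofReal 2) := by
    rw [show ENNReal.ofReal 2 = 2 by norm_num]
    exact (memLp_two_iff_integrable_sq hvcont.aestronglyMeasurable).mpr hvInt2
  have hconj : (2:ℝ).HolderConjugate 2 := by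
    constructor <;> norm_num
  have hCS := integral_mul_le_Lp_mul_Lq_of_nonneg hconj
    (Filter.Eventually.of_forall hu0) (Filter.Eventually.of_forall hv0) huLp hvLp
  have heq : (fun x => u x * v x) = fun x => ‖x‖ ^ q * |mu x - nu x| := by
    funext x
    rw [hu, hv]
    have : |mu x - nu x| = (Real.sqrt (mu x) + Real.sqrt (nu x)) *
        |Real.sqrt (mu x) - Real.sqrt (nu x)| := by
      rw [← abs_of_nonneg (by positivity : (0:ℝ) ≤ Real.sqrt (mu x) + Real.sqrt (nu x)),
        ← abs_mul]
      congr 1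
      nlinarith [Real.sq_sqrt (hmupos x).le, Real.sq_sqrt (hnupos x).le]
    rw [this]; ring
  rw [show (∫ x, u x * v x) = ∫ x, ‖x‖ ^ q * |mu x - nu x| from by rw [heq]] at hCS
  refine hCS.trans ?_
  have hrw2 : ∀ f : EuclideanSpace ℝ (Fin d) → ℝ, (∫ x, f x ^ (2:ℝ)) = ∫ x, f x ^ 2 := by
    intro f
    congr 1
    funext x
    rw [Real.rpow_two]
  apply mul_le_mul
  · rw [hrw2 u]
    apply Real.rpow_le_rpow (integral_nonneg (fun x => by positivity)) ?_ (by norm_num)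
    calc (∫ x, u x ^ 2) ≤ ∫ x, 2 * ((mu x + nu x) * (1 + ‖x‖ ^ 2) ^ q) :=
          integral_mono huInt2 (hM.const_mul 2) husq
      _ = 2 * ∫ x, (mu x + nu x) * (1 + ‖x‖ ^ 2) ^ q := integral_const_mul 2 _
  · rw [hrw2 v]
    apply Real.rpow_le_rpow (integral_nonneg (fun x => by positivity)) ?_ (by norm_num)
    apply le_of_eq
    congr 1
    funext x
    rw [hv, sq_abs]
  · apply Real.rpow_nonneg (integral_nonneg (fun x => by positivity))
  · apply Real.rpow_nonneg
    have h0 : 0 ≤ ∫ x, (mu x + nu x) * (1 + ‖x‖ ^ 2) ^ q := integral_nonneg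
      (fun x => mul_nonneg (by linarith [(hmupos x).le, (hnupos x).le]) (by positivity))
    linarith

lemma wass_le_tv {d : ℕ} (q : ℝ) (hq : 1 ≤ q)
    (nu mu : EuclideanSpace ℝ (Fin d) → ℝ)
    (hnuC : Continuous nu) (hmuC : Continuous mu)
    (hnupos : ∀ x, 0 < nu x) (hmupos : ∀ x, 0 < mu x)
    (hmuInt : Integrable mu) (hnuInt : Integrable nu)
    (hnuprob : ∫ x, nu x = 1) (hmuprob : ∫ x, mu x = 1)
    (hN : Integrable (fun x => (mu x + nu x) * ‖x‖ ^ q)) :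
    wassersteinDist d q
        (volume.withDensity fun x => ENNReal.ofReal (mu x))
        (volume.withDensity fun x => ENNReal.ofReal (nu x)) ≤
      (2 ^ (q - 1) * ∫ x, ‖x‖ ^ q * |mu x - nu x|) ^ (1 / q) := by
  have hq0 : 0 < q := by linarith
  -- nonnegativity of the RHS base
  have hBase0 : 0 ≤ 2 ^ (q - 1) * ∫ x, ‖x‖ ^ q * |mu x - nu x| := by
    apply mul_nonneg (Real.rpow_nonneg (by norm_num) _)
    exact integral_nonneg fun x => mul_nonneg (Real.rpow_nonneg (norm_nonneg _) _) (abs_nonneg _)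
  have hRHS0 : 0 ≤ (2 ^ (q - 1) * ∫ x, ‖x‖ ^ q * |mu x - nu x|) ^ (1 / q) :=
    Real.rpow_nonneg hBase0 _
  -- the coupling cost function
  set c : (EuclideanSpace ℝ (Fin d)) × (EuclideanSpace ℝ (Fin d)) → ℝ := fun z => ‖z.1 - z.2‖ ^ q with hc
  have hccont : Continuous c :=
    (continuous_fst.sub continuous_snd).norm.rpow_const (fun z => Or.inr hq0.le)
  -- bddBelow
  have hbdd : BddBelow { r : ℝ |
      ∃ cpl : Measure ((EuclideanSpace ℝ (Fin d)) × (EuclideanSpace ℝ (Fin d))),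
        cpl.map Prod.fst = (volume.withDensity fun x => ENNReal.ofReal (mu x)) ∧
        cpl.map Prod.snd = (volume.withDensity fun x => ENNReal.ofReal (nu x)) ∧
        r = (∫ z, ‖z.1 - z.2‖ ^ q ∂cpl) ^ (1 / q) } := by
    refine ⟨0, fun r hr => ?_⟩
    obtain ⟨cpl, -, -, rfl⟩ := hr
    exact Real.rpow_nonneg
      (integral_nonneg fun z => Real.rpow_nonneg (norm_nonneg _) _) _
  -- positive/negative parts
  set fR : EuclideanSpace ℝ (Fin d) → ℝ := fun x => max (mu x - nu x) 0 with hfR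
  set gR : EuclideanSpace ℝ (Fin d) → ℝ := fun x => max (nu x - mu x) 0 with hgR
  have hfRc : Continuous fR := by rw [hfR]; exact (hmuC.sub hnuC).max continuous_const
  have hgRc : Continuous gR := by rw [hgR]; exact (hnuC.sub hmuC).max continuous_const
  have hfRInt : Integrable fR := (hmuInt.sub hnuInt).pos_part
  have hgRInt : Integrable gR := (hnuInt.sub hmuInt).pos_part
  set m : ℝ := ∫ x, fR x with hm
  have hm0 : 0 ≤ m := integral_nonneg fun x => le_max_right _ _
  have hdInt : Integrable (fun x => mu x - nu x) := hmuInt.sub hnuInt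
  have hgm : ∫ x, gR x = m := by
    have key : ∀ x, gR x = fR x - (mu x - nu x) := by
      intro x
      simp only [hfR, hgR]
      rcases le_total (mu x) (nu x) with h | h
      · rw [max_eq_left (by linarith : (0:ℝ) ≤ nu x - mu x),
          max_eq_right (by linarith : mu x - nu x ≤ (0:ℝ))]; ring
      · rw [max_eq_right (by linarith : nu x - mu x ≤ (0:ℝ)),
          max_eq_left (by linarith : (0:ℝ) ≤ mu x - nu x)]; ring
    rw [integral_congr_ae (Filter.Eventually.of_forall key),
      integral_sub hfRInt hdInt, integral_sub hmuInt hnuInt,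
      hmuprob, hnuprob, hm]
    ring
  -- ENNReal densities
  set fE : EuclideanSpace ℝ (Fin d) → ENNReal := fun x => ENNReal.ofReal (fR x) with hfE
  set gE : EuclideanSpace ℝ (Fin d) → ENNReal := fun x => ENNReal.ofReal (gR x) with hgE
  set minE : EuclideanSpace ℝ (Fin d) → ENNReal := fun x => ENNReal.ofReal (min (mu x) (nu x)) with hminE
  have hfEm : Measurable fE := hfRc.measurable.ennreal_ofReal
  have hgEm : Measurable gE := hgRc.measurable.ennreal_ofReal
  have hminEm : Measurable minE := (hmuC.min hnuC).measurable.ennreal_ofReal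
  have hmu_split : ∀ x, ENNReal.ofReal (mu x) = minE x + fE x := by
    intro x
    simp only [hminE, hfE, hfR]
    rw [← ENNReal.ofReal_add (le_min (hmupos x).le (hnupos x).le) (le_max_right _ _)]
    congr 1
    rcases le_total (mu x) (nu x) with h | h
    · rw [min_eq_left h, max_eq_right (by linarith : mu x - nu x ≤ (0:ℝ))]; ring
    · rw [min_eq_right h, max_eq_left (by linarith : (0:ℝ) ≤ mu x - nu x)]; ring
  have hnu_split : ∀ x, ENNReal.ofReal (nu x) = minE x + gE x := by
    intro x
    simp only [hminE, hgE, hgR]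
    rw [← ENNReal.ofReal_add (le_min (hmupos x).le (hnupos x).le) (le_max_right _ _)]
    congr 1
    rcases le_total (mu x) (nu x) with h | h
    · rw [min_eq_left h, max_eq_left (by linarith : (0:ℝ) ≤ nu x - mu x)]; ring
    · rw [min_eq_right h, max_eq_right (by linarith : nu x - mu x ≤ (0:ℝ))]; ring
  -- lintegrals of densities
  have lfE : ∫⁻ x, fE x = ENNReal.ofReal m := by
    rw [hm, ofReal_integral_eq_lintegral_ofReal hfRInt
      (Filter.Eventually.of_forall fun x => le_max_right _ _)]
  have lgE : ∫⁻ x, gE x = ENNReal.ofReal m := by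
    rw [← hgm, ofReal_integral_eq_lintegral_ofReal hgRInt
      (Filter.Eventually.of_forall fun x => le_max_right _ _)]
  -- diagonal map
  have hdiag : Measurable fun x : EuclideanSpace ℝ (Fin d) => (x, x) :=
    measurable_id.prodMk measurable_id
  have hfstdiag : (Prod.fst ∘ fun x : EuclideanSpace ℝ (Fin d) => (x, x)) = id := rfl
  have hsnddiag : (Prod.snd ∘ fun x : EuclideanSpace ℝ (Fin d) => (x, x)) = id := rfl
  have hnormq : Measurable fun x : EuclideanSpace ℝ (Fin d) => ENNReal.ofReal (‖x‖ ^ q) :=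
    (continuous_norm.rpow_const (fun x => Or.inr hq0.le)).measurable.ennreal_ofReal
  rcases eq_or_lt_of_le hm0 with hmz | hmpos
  · -- m = 0 : the two measures agree a.e.
    have hfRnn : (0:EuclideanSpace ℝ (Fin d) → ℝ) ≤ fR := fun x => le_max_right _ _
    have hgRnn : (0:EuclideanSpace ℝ (Fin d) → ℝ) ≤ gR := fun x => le_max_right _ _
    have hfR0 : fR =ᵐ[volume] 0 :=
      (integral_eq_zero_iff_of_nonneg hfRnn hfRInt).mp (hm ▸ hmz.symm)
    have hgR0 : gR =ᵐ[volume] 0 :=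
      (integral_eq_zero_iff_of_nonneg hgRnn hgRInt).mp (by rw [hgm, ← hmz])
    have hae : (fun x => ENNReal.ofReal (mu x)) =ᵐ[volume]
        (fun x => ENNReal.ofReal (nu x)) := by
      filter_upwards [hfR0, hgR0] with x h1 h2
      have h1' : mu x - nu x ≤ 0 := by
        have := le_max_left (mu x - nu x) (0:ℝ)
        simp only [hfR] at h1
        rw [h1] at this
        simpa using this
      have h2' : nu x - mu x ≤ 0 := by
        have := le_max_left (nu x - mu x) (0:ℝ)
        simp only [hgR] at h2
        rw [h2] at this
        simpa using this
      have : mu x = nu x := by linarith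
      rw [this]
    have hMeq : (volume.withDensity fun x => ENNReal.ofReal (mu x))
        = volume.withDensity fun x => ENNReal.ofReal (nu x) := withDensity_congr_ae hae
    set cpl : Measure ((EuclideanSpace ℝ (Fin d)) × (EuclideanSpace ℝ (Fin d))) :=
      (volume.withDensity fun x => ENNReal.ofReal (mu x)).map (fun x => (x, x)) with hcpl
    have marg1 : cpl.map Prod.fst = volume.withDensity fun x => ENNReal.ofReal (mu x) := by
      rw [hcpl, Measure.map_map measurable_fst hdiag, hfstdiag, Measure.map_id]
    have marg2 : cpl.map Prod.snd = volume.withDensity fun x => ENNReal.ofReal (nu x) := by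
      rw [hcpl, Measure.map_map measurable_snd hdiag, hsnddiag, Measure.map_id, hMeq]
    have hval : (∫ z, ‖z.1 - z.2‖ ^ q ∂cpl) ^ (1 / q) = 0 := by
      rw [hcpl, integral_map hdiag.aemeasurable hccont.aestronglyMeasurable]
      simp [hc, sub_self, norm_zero, Real.zero_rpow hq0.ne',
        Real.zero_rpow (by positivity : q⁻¹ ≠ 0)]
    refine le_trans (csInf_le hbdd ⟨cpl, marg1, marg2, rfl⟩) ?_
    rw [hval]
    exact hRHS0
  · -- m > 0 : transport coupling
    have hmne : ENNReal.ofReal m ≠ 0 := (ENNReal.ofReal_pos.mpr hmpos).ne'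
    have hmnetop : ENNReal.ofReal m ≠ ⊤ := ENNReal.ofReal_ne_top
    set κ : Measure (EuclideanSpace ℝ (Fin d)) := volume.withDensity minE with hκ
    set μf : Measure (EuclideanSpace ℝ (Fin d)) := volume.withDensity fE with hμf
    set νg : Measure (EuclideanSpace ℝ (Fin d)) := volume.withDensity gE with hνg
    have hμfuniv : μf Set.univ = ENNReal.ofReal m := by
      rw [hμf, withDensity_apply _ MeasurableSet.univ, setLIntegral_univ, lfE]
    have hνguniv : νg Set.univ = ENNReal.ofReal m := by
      rw [hνg, withDensity_apply _ MeasurableSet.univ, setLIntegral_univ, lgE]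
    haveI : IsFiniteMeasure μf := ⟨by rw [hμfuniv]; exact ENNReal.ofReal_lt_top⟩
    haveI : IsFiniteMeasure νg := ⟨by rw [hνguniv]; exact ENNReal.ofReal_lt_top⟩
    set cpl : Measure ((EuclideanSpace ℝ (Fin d)) × (EuclideanSpace ℝ (Fin d))) :=
      κ.map (fun x => (x, x)) + (ENNReal.ofReal m)⁻¹ • (μf.prod νg) with hcpl
    have marg1 : cpl.map Prod.fst = volume.withDensity fun x => ENNReal.ofReal (mu x) := by
      rw [hcpl, Measure.map_add _ _ measurable_fst, Measure.map_smul,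
        Measure.map_map measurable_fst hdiag, hfstdiag, Measure.map_id,
        Measure.map_fst_prod, hνguniv, smul_smul,
        ENNReal.inv_mul_cancel hmne hmnetop, one_smul, hκ, hμf,
        ← withDensity_add_left hminEm fE]
      congr 1
      funext x
      rw [Pi.add_apply, ← hmu_split x]
    have marg2 : cpl.map Prod.snd = volume.withDensity fun x => ENNReal.ofReal (nu x) := by
      rw [hcpl, Measure.map_add _ _ measurable_snd, Measure.map_smul,
        Measure.map_map measurable_snd hdiag, hsnddiag, Measure.map_id,
        Measure.map_snd_prod, hμfuniv, smul_smul,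
        ENNReal.inv_mul_cancel hmne hmnetop, one_smul, hκ, hνg,
        ← withDensity_add_left hminEm gE]
      congr 1
      funext x
      rw [Pi.add_apply, ← hnu_split x]
    -- the cost bound
    have hcost : ∫ z, ‖z.1 - z.2‖ ^ q ∂cpl ≤ 2 ^ (q - 1) * ∫ x, ‖x‖ ^ q * |mu x - nu x| := by
      by_cases hci : Integrable c cpl
      · rw [show (∫ z, ‖z.1 - z.2‖ ^ q ∂cpl) = ∫ z, c z ∂cpl from rfl]
        rw [hcpl] at hci
        obtain ⟨hci1, hci2⟩ := integrable_add_measure.mp hci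
        rw [hcpl, integral_add_measure hci1 hci2]
        have hz1 : ∫ z, c z ∂(κ.map fun x => (x, x)) = 0 := by
          rw [integral_map hdiag.aemeasurable hccont.aestronglyMeasurable]
          simp only [hc, sub_self, norm_zero, Real.zero_rpow hq0.ne', integral_zero]
        rw [hz1, zero_add, integral_smul_measure]
        -- the remaining product term
        have hci2' : Integrable c (μf.prod νg) :=
          (integrable_smul_measure (ENNReal.inv_ne_zero.mpr hmnetop)
            (ENNReal.inv_ne_top.mpr hmne)).mp hci2
        set A1 : ℝ := ∫ x, fR x * ‖x‖ ^ q with hA1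
        set A2 : ℝ := ∫ x, gR x * ‖x‖ ^ q with hA2
        have hA1Int : Integrable (fun x => fR x * ‖x‖ ^ q) := by
          refine Integrable.mono hN ((hfRc.mul (continuous_norm.rpow_const
            (fun x => Or.inr hq0.le))).aestronglyMeasurable) ?_
          filter_upwards with x
          rw [Real.norm_eq_abs, Real.norm_eq_abs,
            abs_of_nonneg (mul_nonneg (le_max_right _ _) (Real.rpow_nonneg (norm_nonneg _) _)),
            abs_of_nonneg (mul_nonneg (by linarith [(hmupos x).le, (hnupos x).le])
              (Real.rpow_nonneg (norm_nonneg _) _))]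
          apply mul_le_mul_of_nonneg_right ?_ (Real.rpow_nonneg (norm_nonneg _) _)
          show max (mu x - nu x) 0 ≤ mu x + nu x
          rcases le_total (mu x - nu x) 0 with h | h
          · rw [max_eq_right h]; linarith [(hmupos x).le, (hnupos x).le]
          · rw [max_eq_left h]; linarith [(hnupos x).le]
        have hA2Int : Integrable (fun x => gR x * ‖x‖ ^ q) := by
          refine Integrable.mono hN ((hgRc.mul (continuous_norm.rpow_const
            (fun x => Or.inr hq0.le))).aestronglyMeasurable) ?_
          filter_upwards with x
          rw [Real.norm_eq_abs, Real.norm_eq_abs,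
            abs_of_nonneg (mul_nonneg (le_max_right _ _) (Real.rpow_nonneg (norm_nonneg _) _)),
            abs_of_nonneg (mul_nonneg (by linarith [(hmupos x).le, (hnupos x).le])
              (Real.rpow_nonneg (norm_nonneg _) _))]
          apply mul_le_mul_of_nonneg_right ?_ (Real.rpow_nonneg (norm_nonneg _) _)
          show max (nu x - mu x) 0 ≤ mu x + nu x
          rcases le_total (nu x - mu x) 0 with h | h
          · rw [max_eq_right h]; linarith [(hmupos x).le, (hnupos x).le]
          · rw [max_eq_left h]; linarith [(hmupos x).le]
        have hA10 : 0 ≤ A1 := integral_nonneg fun x =>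
          mul_nonneg (le_max_right _ _) (Real.rpow_nonneg (norm_nonneg _) _)
        have hA20 : 0 ≤ A2 := integral_nonneg fun x =>
          mul_nonneg (le_max_right _ _) (Real.rpow_nonneg (norm_nonneg _) _)
        -- lintegral computations
        have hT1 : ∫⁻ x, ENNReal.ofReal (‖x‖ ^ q) ∂μf = ENNReal.ofReal A1 := by
          rw [hμf, lintegral_withDensity_eq_lintegral_mul volume hfEm hnormq]
          rw [hA1, ofReal_integral_eq_lintegral_ofReal hA1Int
            (Filter.Eventually.of_forall fun x =>
              mul_nonneg (le_max_right _ _) (Real.rpow_nonneg (norm_nonneg _) _))]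
          congr 1
          funext x
          rw [Pi.mul_apply, hfE, ← ENNReal.ofReal_mul (le_max_right _ _)]
        have hT2 : ∫⁻ x, ENNReal.ofReal (‖x‖ ^ q) ∂νg = ENNReal.ofReal A2 := by
          rw [hνg, lintegral_withDensity_eq_lintegral_mul volume hgEm hnormq]
          rw [hA2, ofReal_integral_eq_lintegral_ofReal hA2Int
            (Filter.Eventually.of_forall fun x =>
              mul_nonneg (le_max_right _ _) (Real.rpow_nonneg (norm_nonneg _) _))]
          congr 1
          funext x
          rw [Pi.mul_apply, hgE, ← ENNReal.ofReal_mul (le_max_right _ _)]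
        -- pointwise kernel bound
        have hptw : ∀ z : (EuclideanSpace ℝ (Fin d)) × (EuclideanSpace ℝ (Fin d)),
            ENNReal.ofReal (c z) ≤ (2:ENNReal) ^ (q - 1) *
              (ENNReal.ofReal (‖z.1‖ ^ q) + ENNReal.ofReal (‖z.2‖ ^ q)) := by
          intro z
          have h1 : ENNReal.ofReal (c z) ≤ ENNReal.ofReal ((‖z.1‖ + ‖z.2‖) ^ q) := by
            apply ENNReal.ofReal_le_ofReal
            exact Real.rpow_le_rpow (norm_nonneg _) (norm_sub_le _ _) hq0.le
          refine h1.trans ?_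
          rw [← ENNReal.ofReal_rpow_of_nonneg (by positivity) hq0.le,
            ENNReal.ofReal_add (norm_nonneg _) (norm_nonneg _)]
          refine (ENNReal.rpow_add_le_mul_rpow_add_rpow _ _ hq).trans ?_
          rw [ENNReal.ofReal_rpow_of_nonneg (norm_nonneg _) hq0.le,
            ENNReal.ofReal_rpow_of_nonneg (norm_nonneg _) hq0.le]
        -- measurability on the product
        have hmeas1 : Measurable fun z : (EuclideanSpace ℝ (Fin d)) × (EuclideanSpace ℝ (Fin d)) =>
            ENNReal.ofReal (‖z.1‖ ^ q) := hnormq.comp measurable_fst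
        have hmeas2 : Measurable fun z : (EuclideanSpace ℝ (Fin d)) × (EuclideanSpace ℝ (Fin d)) =>
            ENNReal.ofReal (‖z.2‖ ^ q) := hnormq.comp measurable_snd
        -- lintegral bound over the product
        have hL : ∫⁻ z, ENNReal.ofReal (c z) ∂(μf.prod νg) ≤
            ENNReal.ofReal (2 ^ (q - 1) * ((A1 + A2) * m)) := by
          calc ∫⁻ z, ENNReal.ofReal (c z) ∂(μf.prod νg)
              ≤ ∫⁻ z, (2:ENNReal) ^ (q - 1) *
                  (ENNReal.ofReal (‖z.1‖ ^ q) + ENNReal.ofReal (‖z.2‖ ^ q)) ∂(μf.prod νg) :=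
                lintegral_mono hptw
            _ = (2:ENNReal) ^ (q - 1) * ∫⁻ z,
                  (ENNReal.ofReal (‖z.1‖ ^ q) + ENNReal.ofReal (‖z.2‖ ^ q)) ∂(μf.prod νg) := by
                rw [lintegral_const_mul _ (by exact hmeas1.add hmeas2)]
            _ = (2:ENNReal) ^ (q - 1) *
                  ((∫⁻ z, ENNReal.ofReal (‖z.1‖ ^ q) ∂(μf.prod νg)) +
                   (∫⁻ z, ENNReal.ofReal (‖z.2‖ ^ q) ∂(μf.prod νg))) := by
                rw [lintegral_add_left hmeas1]
            _ = (2:ENNReal) ^ (q - 1) *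
                  (ENNReal.ofReal A1 * ENNReal.ofReal m + ENNReal.ofReal m * ENNReal.ofReal A2) := by
                congr 1
                congr 1
                · rw [MeasureTheory.lintegral_prod _ hmeas1.aemeasurable]
                  simp only [lintegral_const]
                  rw [lintegral_mul_const _ hnormq, hT1, hνguniv]
                · rw [MeasureTheory.lintegral_prod _ hmeas2.aemeasurable]
                  have hinner : (fun _ : EuclideanSpace ℝ (Fin d) =>
                      ∫⁻ y, ENNReal.ofReal (‖y‖ ^ q) ∂νg)
                      = fun _ => ENNReal.ofReal A2 := funext fun _ => hT2
                  rw [hinner, lintegral_const, hμfuniv, mul_comm]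
            _ = ENNReal.ofReal (2 ^ (q - 1) * ((A1 + A2) * m)) := by
                rw [ENNReal.ofReal_mul (by positivity : (0:ℝ) ≤ 2 ^ (q - 1)),
                  ENNReal.ofReal_mul (by linarith : (0:ℝ) ≤ A1 + A2),
                  ENNReal.ofReal_add hA10 hA20]
                have h2 : ENNReal.ofReal ((2:ℝ) ^ (q - 1)) = (2:ENNReal) ^ (q - 1) := by
                  rw [← ENNReal.ofReal_rpow_of_pos (by norm_num : (0:ℝ) < 2)]
                  norm_num
                rw [h2]
                ring
        -- convert to a real bound
        have hcnn : 0 ≤ᵐ[μf.prod νg] c :=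
          Filter.Eventually.of_forall fun z => Real.rpow_nonneg (norm_nonneg _) _
        have hTeq : ∫ z, c z ∂(μf.prod νg) =
            (∫⁻ z, ENNReal.ofReal (c z) ∂(μf.prod νg)).toReal := by
          rw [integral_eq_lintegral_of_nonneg_ae hcnn hccont.aestronglyMeasurable]
        have hTle : ∫ z, c z ∂(μf.prod νg) ≤ 2 ^ (q - 1) * ((A1 + A2) * m) := by
          rw [hTeq]
          have := ENNReal.toReal_mono ENNReal.ofReal_ne_top hL
          rwa [ENNReal.toReal_ofReal (by positivity)] at this
        -- combine
        have htoReal : ((ENNReal.ofReal m)⁻¹).toReal = m⁻¹ := by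
          rw [ENNReal.toReal_inv, ENNReal.toReal_ofReal hm0]
        rw [htoReal, smul_eq_mul]
        have hfinal : m⁻¹ * ∫ z, c z ∂(μf.prod νg) ≤ m⁻¹ * (2 ^ (q - 1) * ((A1 + A2) * m)) :=
          mul_le_mul_of_nonneg_left hTle (by positivity)
        refine hfinal.trans ?_
        have hAsum : A1 + A2 = ∫ x, ‖x‖ ^ q * |mu x - nu x| := by
          rw [hA1, hA2, ← integral_add hA1Int hA2Int]
          congr 1
          funext x
          simp only [hfR, hgR]
          rcases le_total (mu x) (nu x) with h | h
          · rw [max_eq_right (by linarith : mu x - nu x ≤ (0:ℝ)),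
              max_eq_left (by linarith : (0:ℝ) ≤ nu x - mu x),
              abs_of_nonpos (by linarith : mu x - nu x ≤ (0:ℝ))]
            ring
          · rw [max_eq_left (by linarith : (0:ℝ) ≤ mu x - nu x),
              max_eq_right (by linarith : nu x - mu x ≤ (0:ℝ)),
              abs_of_nonneg (by linarith : (0:ℝ) ≤ mu x - nu x)]
            ring
        rw [hAsum]
        rw [show m⁻¹ * (2 ^ (q - 1) * ((∫ x, ‖x‖ ^ q * |mu x - nu x|) * m))
            = (m⁻¹ * m) * (2 ^ (q - 1) * ∫ x, ‖x‖ ^ q * |mu x - nu x|) by ring,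
          inv_mul_cancel₀ hmpos.ne', one_mul]
      · rw [show (∫ z, ‖z.1 - z.2‖ ^ q ∂cpl) = ∫ z, c z ∂cpl from rfl, integral_undef hci]
        exact hBase0
    refine le_trans (csInf_le hbdd ⟨cpl, marg1, marg2, rfl⟩) ?_
    apply Real.rpow_le_rpow (integral_nonneg fun z => Real.rpow_nonneg (norm_nonneg _) _)
      hcost (by positivity)


lemma final_algebra (q γ : ℝ) (hq : 1 ≤ q) (hγ : 0 < γ) (M I A : ℝ)
    (hM0 : 0 ≤ M) (hI0 : 0 ≤ I) (hA0 : 0 ≤ A)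
    (hA : A ≤ (2 * M) ^ ((1:ℝ)/2) * ((1 / (2 * γ)) * I) ^ ((1:ℝ)/2)) :
    (2 ^ (q - 1) * A) ^ (1 / q) ≤
      2 * M ^ (1 / (2 * q)) * γ ^ (-(1 / (2 * q))) * I ^ (1 / (2 * q)) := by
  have hq0 : 0 < q := by linarith
  have hMI0 : (0:ℝ) ≤ M * (γ⁻¹ * I) := by positivity
  have hcomb : (2 * M) ^ ((1:ℝ)/2) * ((1 / (2 * γ)) * I) ^ ((1:ℝ)/2)
      = (M * (γ⁻¹ * I)) ^ ((1:ℝ)/2) := by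
    rw [← Real.mul_rpow (by linarith) (by positivity)]
    congr 1
    field_simp
  have hA' : A ≤ (M * (γ⁻¹ * I)) ^ ((1:ℝ)/2) := by rw [← hcomb]; exact hA
  have step1 : (2 ^ (q - 1) * A) ^ (1 / q) ≤
      (2 ^ (q - 1) * (M * (γ⁻¹ * I)) ^ ((1:ℝ)/2)) ^ (1 / q) :=
    Real.rpow_le_rpow (mul_nonneg (by positivity) hA0)
      (mul_le_mul_of_nonneg_left hA' (by positivity)) (by positivity)
  refine step1.trans ?_
  have h2le : (2:ℝ) ^ ((q - 1) * (1 / q)) ≤ 2 := by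
    have : (2:ℝ) ^ ((q - 1) * (1 / q)) ≤ 2 ^ (1:ℝ) := by
      apply Real.rpow_le_rpow_of_exponent_le (by norm_num)
      rw [mul_one_div, div_le_one hq0]
      linarith
    simpa using this
  calc (2 ^ (q - 1) * (M * (γ⁻¹ * I)) ^ ((1:ℝ)/2)) ^ (1 / q)
      = (2 ^ (q - 1)) ^ ((1:ℝ) / q) * ((M * (γ⁻¹ * I)) ^ ((1:ℝ)/2)) ^ ((1:ℝ) / q) :=
        Real.mul_rpow (by positivity) (Real.rpow_nonneg hMI0 _)
    _ = 2 ^ ((q - 1) * (1 / q)) * (M * (γ⁻¹ * I)) ^ (1 / (2 * q)) := by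
        rw [← Real.rpow_mul (by norm_num : (0:ℝ) ≤ 2), ← Real.rpow_mul hMI0]
        congr 1
        ring
    _ ≤ 2 * (M * (γ⁻¹ * I)) ^ (1 / (2 * q)) :=
        mul_le_mul_of_nonneg_right h2le (Real.rpow_nonneg hMI0 _)
    _ = 2 * (M ^ (1 / (2 * q)) * (γ ^ (-(1 / (2 * q))) * I ^ (1 / (2 * q)))) := by
        rw [Real.mul_rpow hM0 (by positivity), Real.mul_rpow (by positivity) hI0,
          Real.inv_rpow hγ.le, ← Real.rpow_neg hγ.le]
    _ = 2 * M ^ (1 / (2 * q)) * γ ^ (-(1 / (2 * q))) * I ^ (1 / (2 * q)) := by ring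

/-- Wasserstein–Fisher bound under a Poincaré inequality:
`W_q(μ,ν) ≤ 2 M_{2q}(μ+ν)^{1/(2q)} γ^{-1/(2q)} I(μ|ν)^{1/(2q)}`. -/
theorem wasserstein_fisher_bound_under_poincare
    (d : ℕ) (hd : 0 < d) (γ q : ℝ) (hγ : 0 < γ) (hq : 1 ≤ q)
    (nu mu : EuclideanSpace ℝ (Fin d) → ℝ)
    (hnuC : ContDiff ℝ 1 nu) (hmuC : ContDiff ℝ 1 mu)
    (hnupos : ∀ x, 0 < nu x) (hmupos : ∀ x, 0 < mu x)
    (hnuprob : ∫ x, nu x = 1) (hmuprob : ∫ x, mu x = 1)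
    (hPI : ∀ g : EuclideanSpace ℝ (Fin d) → ℝ, ContDiff ℝ 1 g →
      Integrable (fun x => nu x * g x ^ 2) →
      Integrable (fun x => nu x * g x) →
      Integrable (fun x => nu x * ‖gradient g x‖ ^ 2) →
      (∫ x, nu x * g x ^ 2) - (∫ x, nu x * g x) ^ 2 ≤
        (1 / γ) * ∫ x, nu x * ‖gradient g x‖ ^ 2)
    (hM : Integrable (fun x => (mu x + nu x) * (1 + ‖x‖ ^ 2) ^ (2 * q / 2)))
    (hFI : Integrable (fun x =>
      mu x * ‖gradient (fun y => Real.log (mu y / nu y)) x‖ ^ 2)) :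
    wassersteinDist d q
        (volume.withDensity fun x => ENNReal.ofReal (mu x))
        (volume.withDensity fun x => ENNReal.ofReal (nu x)) ≤
      2 * (∫ x, (mu x + nu x) * (1 + ‖x‖ ^ 2) ^ (2 * q / 2)) ^ (1 / (2 * q)) *
        γ ^ (-(1 / (2 * q))) *
        (∫ x, mu x * ‖gradient (fun y => Real.log (mu y / nu y)) x‖ ^ 2) ^
          (1 / (2 * q)) := by
  have hq0 : 0 < q := by linarith
  have hexp : 2 * q / 2 = q := by ring
  simp only [hexp] at hM ⊢
  have hmuInt : Integrable mu := by
    by_contra h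
    rw [integral_undef h] at hmuprob; norm_num at hmuprob
  have hnuInt : Integrable nu := by
    by_contra h
    rw [integral_undef h] at hnuprob; norm_num at hnuprob
  have hN : Integrable (fun x => (mu x + nu x) * ‖x‖ ^ q) := by
    refine Integrable.mono hM (((hmuC.continuous.add hnuC.continuous).mul
      (continuous_norm.rpow_const fun x => Or.inr hq0.le)).aestronglyMeasurable) ?_
    filter_upwards with x
    have hs0 : (0:ℝ) ≤ mu x + nu x := by linarith [(hmupos x).le, (hnupos x).le]
    rw [Real.norm_eq_abs, Real.norm_eq_abs,
      abs_of_nonneg (mul_nonneg hs0 (Real.rpow_nonneg (norm_nonneg _) _)),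
      abs_of_nonneg (mul_nonneg hs0 (by positivity))]
    apply mul_le_mul_of_nonneg_left ?_ hs0
    apply Real.rpow_le_rpow (norm_nonneg x) ?_ hq0.le
    nlinarith [norm_nonneg x, sq_nonneg (‖x‖ - 1)]
  have key1 := wass_le_tv q hq nu mu hnuC.continuous hmuC.continuous hnupos hmupos
    hmuInt hnuInt hnuprob hmuprob hN
  have key2 := cs_bound q hq nu mu hnuC hmuC hnupos hmupos hmuInt hnuInt hM
  have key3 := hellinger_bound γ hγ nu mu hnuC hmuC hnupos hmupos hnuprob hmuprob hPI hFI
  have hA0 : 0 ≤ ∫ x, ‖x‖ ^ q * |mu x - nu x| :=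
    integral_nonneg fun x => mul_nonneg (Real.rpow_nonneg (norm_nonneg _) _) (abs_nonneg _)
  have hH0 : 0 ≤ ∫ x, (Real.sqrt (mu x) - Real.sqrt (nu x)) ^ 2 :=
    integral_nonneg fun x => sq_nonneg _
  have hM0 : 0 ≤ ∫ x, (mu x + nu x) * (1 + ‖x‖ ^ 2) ^ q :=
    integral_nonneg fun x => mul_nonneg
      (by linarith [(hmupos x).le, (hnupos x).le]) (by positivity)
  have hI0 : 0 ≤ ∫ x, mu x * ‖gradient (fun y => Real.log (mu y / nu y)) x‖ ^ 2 :=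
    integral_nonneg fun x => mul_nonneg (hmupos x).le (by positivity)
  have hA : (∫ x, ‖x‖ ^ q * |mu x - nu x|) ≤
      (2 * ∫ x, (mu x + nu x) * (1 + ‖x‖ ^ 2) ^ q) ^ ((1:ℝ)/2) *
      ((1 / (2 * γ)) * ∫ x, mu x *
        ‖gradient (fun y => Real.log (mu y / nu y)) x‖ ^ 2) ^ ((1:ℝ)/2) := by
    refine key2.trans ?_
    apply mul_le_mul_of_nonneg_left ?_ (Real.rpow_nonneg (by linarith) _)
    exact Real.rpow_le_rpow hH0 key3 (by norm_num)
  exact key1.trans (final_algebra q γ hq hγ _ _ _ hM0 hI0 hA0 hA)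
end

section
/- (Gaussian initialization KL bound) Let ν = e^{−U} with U C¹, ∇U(0) = 0, and suppose U(y) ≤ U(0) + (2L/(1+α)) (1 + ‖y‖^ℓ) ∑_{i=1}^N ‖y‖^{1+α_i} for all y, where 0 < α ≤ α_i ≤ 1. If p₀ = N(0, (1/L) I_d), then H(p₀|ν) ≤ U(0) − (d/2) log(2πe/L) + C (d + ℓ + 1 + α_N)^{(ℓ+1+α_N)/2} for some constant C depending only on N, L, α; in particular H(p₀|ν) = O(d^{(ℓ+1+α_N)/2}). -/
open MeasureTheory Real

lemma integral_gauss (d : ℕ) {b : ℝ} (hb : 0 < b) :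
    ∫ x : EuclideanSpace ℝ (Fin d), rexp (-b * ‖x‖^2) = (π/b) ^ ((d:ℝ)/2) := by
  rw [GaussianFourier.integral_rexp_neg_mul_sq_norm hb]
  simp

lemma integrable_gauss (d : ℕ) {b : ℝ} (hb : 0 < b) :
    Integrable (fun x : EuclideanSpace ℝ (Fin d) => rexp (-b * ‖x‖^2)) := by
  have h := (GaussianFourier.integrable_cexp_neg_mul_sq_norm_add
    (V := EuclideanSpace ℝ (Fin d)) (b := (b:ℂ)) (by simpa using hb) 0 0).norm
  convert h using 2 with x
  simp [Complex.norm_exp, ← Complex.ofReal_pow]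

lemma pointwise_rpow_le {s K t : ℝ} (hs : 0 < s) (hK : 0 < K) (ht : 0 ≤ t) :
    t ^ s ≤ K ^ s * rexp (-s/2) * rexp (s/(2*K^2) * t^2) := by
  rcases eq_or_lt_of_le ht with h0 | htpos
  · rw [← h0, Real.zero_rpow hs.ne']
    positivity
  · have hlog : Real.log t ≤ Real.log K + (t^2/K^2 - 1)/2 := by
      have h1 : Real.log (t/K) ≤ ((t/K)^2 - 1)/2 := by
        have h2 : Real.log ((t/K)^2) ≤ (t/K)^2 - 1 :=
          Real.log_le_sub_one_of_pos (by positivity)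
        rw [Real.log_pow] at h2
        push_cast at h2
        linarith
      rw [Real.log_div htpos.ne' hK.ne'] at h1
      have : (t/K)^2 = t^2/K^2 := by ring
      linarith [h1, this ▸ h1]
    have := Real.rpow_def_of_pos htpos s
    rw [this]
    have hrhs : K ^ s * rexp (-s/2) * rexp (s/(2*K^2) * t^2)
        = rexp (s * Real.log K + (-s/2) + s/(2*K^2) * t^2) := by
      rw [Real.exp_add, Real.exp_add, Real.rpow_def_of_pos hK, mul_comm (Real.log K) s]
    rw [hrhs]
    apply Real.exp_le_exp.mpr
    have hK2 : (0:ℝ) < K^2 := by positivity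
    have : s * Real.log t ≤ s * (Real.log K + (t^2/K^2 - 1)/2) :=
      mul_le_mul_of_nonneg_left hlog hs.le
    calc Real.log t * s = s * Real.log t := by ring
      _ ≤ s * (Real.log K + (t^2/K^2 - 1)/2) := this
      _ = s * Real.log K + (-s/2) + s/(2*K^2) * t^2 := by field_simp; ring

lemma cont_rpow_gauss (d : ℕ) {s b : ℝ} (hs : 0 ≤ s) :
    Continuous (fun x : EuclideanSpace ℝ (Fin d) => ‖x‖ ^ s * rexp (-b * ‖x‖^2)) := by
  apply Continuous.mul
  · exact continuous_norm.rpow_const (fun x => Or.inr hs)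
  · exact Real.continuous_exp.comp (by continuity)

lemma integrable_rpow_gauss (d : ℕ) {s b : ℝ} (hs : 0 ≤ s) (hb : 0 < b) :
    Integrable (fun x : EuclideanSpace ℝ (Fin d) => ‖x‖ ^ s * rexp (-b * ‖x‖^2)) := by
  rcases eq_or_lt_of_le hs with h0 | hspos
  · simpa [← h0, Real.rpow_zero] using integrable_gauss d hb
  · have hK : (0:ℝ) < Real.sqrt (s/b) := Real.sqrt_pos.mpr (by positivity)
    have hK2 : (Real.sqrt (s/b))^2 = s/b := Real.sq_sqrt (by positivity)
    apply Integrable.mono' (((integrable_gauss d (show (0:ℝ) < b/2 by positivity)).const_mul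
      ((Real.sqrt (s/b)) ^ s * rexp (-s/2))))
      ((cont_rpow_gauss d hs).aestronglyMeasurable)
    filter_upwards with x
    have h1 : ‖x‖ ^ s ≤ (Real.sqrt (s/b)) ^ s * rexp (-s/2) * rexp (b/2 * ‖x‖^2) := by
      have := pointwise_rpow_le hspos hK (norm_nonneg x)
      rw [hK2] at this
      have heq : s/(2*(s/b)) = b/2 := by field_simp
      rwa [heq] at this
    have hnn : (0:ℝ) ≤ ‖x‖ ^ s * rexp (-b * ‖x‖^2) := by positivity
    rw [Real.norm_of_nonneg hnn]
    have h2 : ‖x‖ ^ s * rexp (-b * ‖x‖^2)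
        ≤ (Real.sqrt (s/b)) ^ s * rexp (-s/2) * rexp (b/2 * ‖x‖^2) * rexp (-b * ‖x‖^2) :=
      mul_le_mul_of_nonneg_right h1 (Real.exp_pos _).le
    calc ‖x‖ ^ s * rexp (-b * ‖x‖^2)
        ≤ (Real.sqrt (s/b)) ^ s * rexp (-s/2) * rexp (b/2 * ‖x‖^2) * rexp (-b * ‖x‖^2) := h2
      _ = (Real.sqrt (s/b)) ^ s * rexp (-s/2) * rexp (-(b/2) * ‖x‖^2) := by
          rw [mul_assoc, ← Real.exp_add]; ring_nf

lemma weighted_integral (d : ℕ) {L θ : ℝ} (hL : 0 < L) (hθ : θ < L/2) :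
    ∫ x : EuclideanSpace ℝ (Fin d),
      (L/(2*π)) ^ ((d:ℝ)/2) * rexp (-(L*‖x‖^2)/2) * rexp (θ*‖x‖^2)
      = (L/(L-2*θ)) ^ ((d:ℝ)/2) := by
  have hb : 0 < L/2 - θ := by linarith
  have hrw : ∀ x : EuclideanSpace ℝ (Fin d),
      (L/(2*π)) ^ ((d:ℝ)/2) * rexp (-(L*‖x‖^2)/2) * rexp (θ*‖x‖^2)
      = (L/(2*π)) ^ ((d:ℝ)/2) * rexp (-(L/2-θ)*‖x‖^2) := by
    intro x
    rw [mul_assoc, ← Real.exp_add]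
    ring_nf
  simp_rw [hrw]
  rw [integral_const_mul, integral_gauss d hb]
  rw [← Real.mul_rpow (by positivity) (by positivity)]
  congr 1
  have hπ := Real.pi_pos
  have h1 : L - 2*θ ≠ 0 := by linarith
  have h2 : L/2 - θ ≠ 0 := by linarith
  field_simp

lemma integrable_p0_rpow (d : ℕ) {L s : ℝ} (hL : 0 < L) (hs : 0 ≤ s) :
    Integrable (fun x : EuclideanSpace ℝ (Fin d) =>
      (L/(2*π)) ^ ((d:ℝ)/2) * rexp (-(L*‖x‖^2)/2) * ‖x‖ ^ s) := by
  have h := ((integrable_rpow_gauss d hs (show (0:ℝ) < L/2 by positivity)).const_mul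
    ((L/(2*π)) ^ ((d:ℝ)/2)))
  convert h using 2 with x
  have he : -(L*‖x‖^2)/2 = -(L/2)*‖x‖^2 := by ring
  rw [he]
  ring

lemma moment_upper (d : ℕ) (hd : 0 < d) {L s : ℝ} (hL : 0 < L) (hs : 0 < s) :
    ∫ x : EuclideanSpace ℝ (Fin d),
      (L/(2*π)) ^ ((d:ℝ)/2) * rexp (-(L*‖x‖^2)/2) * ‖x‖ ^ s
      ≤ (((d:ℝ)+s)/L) ^ (s/2) := by
  set M : ℝ := ((d:ℝ)+s)/L with hM
  have hdpos : (0:ℝ) < d := Nat.cast_pos.mpr hd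
  have hMpos : 0 < M := by positivity
  have hK : (0:ℝ) < Real.sqrt M := Real.sqrt_pos.mpr hMpos
  have hK2 : (Real.sqrt M)^2 = M := Real.sq_sqrt hMpos.le
  set θ : ℝ := s*L/(2*((d:ℝ)+s)) with hθdef
  have hθ : θ < L/2 := by
    rw [hθdef, div_lt_div_iff₀ (by positivity) (by norm_num)]
    nlinarith
  have hpt : ∀ x : EuclideanSpace ℝ (Fin d),
      (L/(2*π)) ^ ((d:ℝ)/2) * rexp (-(L*‖x‖^2)/2) * ‖x‖ ^ s
      ≤ (Real.sqrt M) ^ s * rexp (-s/2) *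
        ((L/(2*π)) ^ ((d:ℝ)/2) * rexp (-(L*‖x‖^2)/2) * rexp (θ*‖x‖^2)) := by
    intro x
    have h1 := pointwise_rpow_le hs hK (norm_nonneg x)
    rw [hK2] at h1
    have heq : s/(2*M) = θ := by
      rw [hθdef, hM]
      field_simp
    rw [heq] at h1
    have hp0 : (0:ℝ) ≤ (L/(2*π)) ^ ((d:ℝ)/2) * rexp (-(L*‖x‖^2)/2) := by positivity
    calc (L/(2*π)) ^ ((d:ℝ)/2) * rexp (-(L*‖x‖^2)/2) * ‖x‖ ^ s
        ≤ (L/(2*π)) ^ ((d:ℝ)/2) * rexp (-(L*‖x‖^2)/2) *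
          ((Real.sqrt M) ^ s * rexp (-s/2) * rexp (θ*‖x‖^2)) :=
          mul_le_mul_of_nonneg_left h1 hp0
      _ = (Real.sqrt M) ^ s * rexp (-s/2) *
          ((L/(2*π)) ^ ((d:ℝ)/2) * rexp (-(L*‖x‖^2)/2) * rexp (θ*‖x‖^2)) := by ring
  have hintR : Integrable (fun x : EuclideanSpace ℝ (Fin d) =>
      (L/(2*π)) ^ ((d:ℝ)/2) * rexp (-(L*‖x‖^2)/2) * rexp (θ*‖x‖^2)) := by
    have hb : 0 < L/2 - θ := by linarith
    have h := (integrable_gauss d hb).const_mul ((L/(2*π)) ^ ((d:ℝ)/2))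
    convert h using 2 with x
    rw [mul_assoc, ← Real.exp_add]
    ring_nf
  have hmono := integral_mono (integrable_p0_rpow d hL hs.le) (hintR.const_mul _) hpt
  rw [integral_const_mul, weighted_integral d hL hθ] at hmono
  have hLθ : L - 2*θ = L*(d:ℝ)/((d:ℝ)+s) := by
    rw [hθdef]; field_simp; ring
  have hratio : L/(L-2*θ) = ((d:ℝ)+s)/(d:ℝ) := by
    rw [hLθ]
    rw [div_div_eq_mul_div]
    field_simp
  rw [hratio] at hmono
  have hexp : (((d:ℝ)+s)/(d:ℝ)) ^ ((d:ℝ)/2) ≤ rexp (s/2) := by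
    have hbase : (0:ℝ) < ((d:ℝ)+s)/(d:ℝ) := by positivity
    rw [Real.rpow_def_of_pos hbase]
    apply Real.exp_le_exp.mpr
    have hlog : Real.log (((d:ℝ)+s)/(d:ℝ)) ≤ s/(d:ℝ) := by
      have := Real.log_le_sub_one_of_pos hbase
      have heq : ((d:ℝ)+s)/(d:ℝ) - 1 = s/(d:ℝ) := by field_simp; ring
      linarith [heq ▸ this]
    calc Real.log (((d:ℝ)+s)/(d:ℝ)) * ((d:ℝ)/2) ≤ (s/(d:ℝ)) * ((d:ℝ)/2) := by
          apply mul_le_mul_of_nonneg_right hlog (by positivity)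
      _ = s/2 := by field_simp
  have hKs : (Real.sqrt M) ^ s = M ^ (s/2) := by
    rw [Real.sqrt_eq_rpow, ← Real.rpow_mul hMpos.le]
    congr 1
    ring
  calc ∫ x : EuclideanSpace ℝ (Fin d),
        (L/(2*π)) ^ ((d:ℝ)/2) * rexp (-(L*‖x‖^2)/2) * ‖x‖ ^ s
      ≤ (Real.sqrt M) ^ s * rexp (-s/2) * (((d:ℝ)+s)/(d:ℝ)) ^ ((d:ℝ)/2) := hmono
    _ ≤ (Real.sqrt M) ^ s * rexp (-s/2) * rexp (s/2) := by
        apply mul_le_mul_of_nonneg_left hexp (by positivity)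
    _ = (Real.sqrt M) ^ s := by
        rw [mul_assoc, ← Real.exp_add, show -s/2 + s/2 = 0 from by ring, Real.exp_zero, mul_one]
    _ = M ^ (s/2) := hKs

lemma p0_integral_one (d : ℕ) {L : ℝ} (hL : 0 < L) :
    ∫ x : EuclideanSpace ℝ (Fin d),
      (L/(2*π)) ^ ((d:ℝ)/2) * rexp (-(L*‖x‖^2)/2) = 1 := by
  have h := weighted_integral d hL (show (0:ℝ) < L/2 by positivity)
  simp only [zero_mul, Real.exp_zero, mul_one, mul_zero, sub_zero] at h
  rw [h, div_self hL.ne', Real.one_rpow]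

lemma integrable_p0 (d : ℕ) {L : ℝ} (hL : 0 < L) :
    Integrable (fun x : EuclideanSpace ℝ (Fin d) =>
      (L/(2*π)) ^ ((d:ℝ)/2) * rexp (-(L*‖x‖^2)/2)) := by
  have h := (integrable_gauss d (show (0:ℝ) < L/2 by positivity)).const_mul
    ((L/(2*π)) ^ ((d:ℝ)/2))
  convert h using 2 with x
  rw [show -(L*‖x‖^2)/2 = -(L/2)*‖x‖^2 from by ring]

lemma integrable_p0_sq (d : ℕ) {L : ℝ} (hL : 0 < L) :
    Integrable (fun x : EuclideanSpace ℝ (Fin d) =>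
      (L/(2*π)) ^ ((d:ℝ)/2) * rexp (-(L*‖x‖^2)/2) * ‖x‖^2) := by
  have h := ((integrable_rpow_gauss d (show (0:ℝ) ≤ 2 by norm_num)
    (show (0:ℝ) < L/2 by positivity)).const_mul ((L/(2*π)) ^ ((d:ℝ)/2)))
  convert h using 2 with x
  rw [show -(L*‖x‖^2)/2 = -(L/2)*‖x‖^2 from by ring,
    show ‖x‖ ^ (2:ℝ) = ‖x‖^(2:ℕ) from Real.rpow_natCast ‖x‖ 2]
  ring

set_option maxHeartbeats 1000000 in
lemma moment2_lower (d : ℕ) (hd : 0 < d) {L : ℝ} (hL : 0 < L) :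
    ((d:ℝ)-1)/L ≤ ∫ x : EuclideanSpace ℝ (Fin d),
      (L/(2*π)) ^ ((d:ℝ)/2) * rexp (-(L*‖x‖^2)/2) * ‖x‖^2 := by
  set D : ℝ := (d:ℝ) with hD
  have hD1 : (1:ℝ) ≤ D := by rw [hD]; exact_mod_cast hd
  have hDpos : 0 < D := by linarith
  set θ : ℝ := L/(2*D^2) with hθdef
  have hθpos : 0 < θ := by positivity
  have hθ' : -θ < L/2 := by nlinarith
  -- pointwise lower bound
  have hpt : ∀ x : EuclideanSpace ℝ (Fin d),
      θ⁻¹ * ((L/(2*π)) ^ ((d:ℝ)/2) * rexp (-(L*‖x‖^2)/2))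
        - θ⁻¹ * ((L/(2*π)) ^ ((d:ℝ)/2) * rexp (-(L*‖x‖^2)/2) * rexp (-θ*‖x‖^2))
      ≤ (L/(2*π)) ^ ((d:ℝ)/2) * rexp (-(L*‖x‖^2)/2) * ‖x‖^2 := by
    intro x
    have hp0 : (0:ℝ) ≤ (L/(2*π)) ^ ((d:ℝ)/2) * rexp (-(L*‖x‖^2)/2) := by positivity
    have hexp : 1 - θ*‖x‖^2 ≤ rexp (-θ*‖x‖^2) := by
      have := Real.add_one_le_exp (-θ*‖x‖^2)
      linarith
    have key : θ⁻¹ * (1 - rexp (-θ*‖x‖^2)) ≤ ‖x‖^2 := by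
      rw [inv_mul_le_iff₀ hθpos] at *
      nlinarith
    nlinarith [mul_le_mul_of_nonneg_left key hp0]
  have hint1 := (integrable_p0 d hL).const_mul θ⁻¹
  have hint2 : Integrable (fun x : EuclideanSpace ℝ (Fin d) =>
      θ⁻¹ * ((L/(2*π)) ^ ((d:ℝ)/2) * rexp (-(L*‖x‖^2)/2) * rexp (-θ*‖x‖^2))) := by
    have hb : 0 < L/2 + θ := by positivity
    have h := ((integrable_gauss d hb).const_mul (θ⁻¹ * (L/(2*π)) ^ ((d:ℝ)/2)))
    convert h using 2 with x
    rw [mul_assoc, mul_assoc, ← Real.exp_add]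
    rw [show -(L*‖x‖^2)/2 + -θ*‖x‖^2 = -(L/2+θ)*‖x‖^2 from by ring]
  have hmono := integral_mono (hint1.sub hint2) (integrable_p0_sq d hL) hpt
  simp only [Pi.sub_apply] at hmono
  rw [integral_sub hint1 hint2, integral_const_mul θ⁻¹, integral_const_mul θ⁻¹,
    p0_integral_one d hL, weighted_integral d hL hθ', mul_one] at hmono
  -- now arithmetic:  θ⁻¹ * 1 - θ⁻¹ * (L/(L-2*(-θ)))^(D/2) ≥ (D-1)/L
  refine le_trans ?_ hmono
  have hLθ : L - 2*(-θ) = L*(1+1/D^2) := by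
    rw [hθdef]; field_simp; ring
  have hbase : L/(L-2*(-θ)) = (1+1/D^2)⁻¹ := by
    rw [hLθ]
    field_simp
  rw [hbase]
  set u : ℝ := 1/(2*D) - 1/(8*D^3) with hu
  have hx0pos : (0:ℝ) < 1/D^2 := by positivity
  have hx0le : 1/D^2 ≤ 1 := by
    rw [div_le_one (by positivity)]; nlinarith
  have hδnn : (0:ℝ) ≤ 1/D^2/2 - (1/D^2)^2/8 := by nlinarith
  have hueq : u = D*(1/D^2/2 - (1/D^2)^2/8) := by
    rw [hu]; field_simp
  have hunn : (0:ℝ) ≤ u := by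
    rw [hueq]; exact mul_nonneg hDpos.le hδnn
  have h1u : (0:ℝ) < 1 + u := by linarith
  have hsq : Real.sqrt (1+1/D^2) ≥ 1 + (1/D^2/2 - (1/D^2)^2/8) := by
    have hs2 := Real.sq_sqrt (show (0:ℝ) ≤ 1+1/D^2 by positivity)
    have hsnn := Real.sqrt_nonneg (1+1/D^2)
    nlinarith [sq_nonneg (Real.sqrt (1+1/D^2) - (1 + (1/D^2/2 - (1/D^2)^2/8)))]
  -- rpow to pow
  have hpow : ((1:ℝ)+1/D^2) ^ (D/2) = (Real.sqrt (1+1/D^2))^(d:ℕ) := by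
    rw [show D/2 = (1/2)*D from by ring, Real.rpow_mul (by positivity : (0:ℝ) ≤ 1+1/D^2),
      ← Real.sqrt_eq_rpow, hD, Real.rpow_natCast]
  have hbern : (1:ℝ) + u ≤ (1 + (1/D^2/2 - (1/D^2)^2/8))^(d:ℕ) := by
    have h := one_add_mul_le_pow (show (-2:ℝ) ≤ 1/D^2/2 - (1/D^2)^2/8 by linarith) d
    refine le_trans ?_ h
    rw [show ((d:ℝ)) = D from hD.symm, ← hueq]
  have hpowge : (1:ℝ) + u ≤ ((1:ℝ)+1/D^2) ^ (D/2) := by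
    rw [hpow]
    refine le_trans hbern (pow_le_pow_left₀ (by linarith) hsq d)
  have hrpowpos : (0:ℝ) < ((1:ℝ)+1/D^2) ^ (D/2) := by positivity
  have hAle : (((1:ℝ)+1/D^2)⁻¹) ^ (D/2) ≤ (1+u)⁻¹ := by
    rw [Real.inv_rpow (by positivity : (0:ℝ) ≤ 1+1/D^2)]
    exact inv_anti₀ h1u hpowge
  have hθinv : θ⁻¹ = 2*D^2/L := by rw [hθdef, inv_div]
  have hu2 : u = (4*D^2-1)/(8*D^3) := by rw [hu]; field_simp; ring
  have hD3 : (0:ℝ) < 8*D^3 := by positivity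
  have hu3 : u*(8*D^3) = 4*D^2 - 1 := by rw [hu2]; field_simp
  have hinner : (D-1)*(1+u) ≤ 2*D^2*u := by
    rw [← mul_le_mul_iff_of_pos_right hD3]
    have e1 : (D-1)*(1+u)*(8*D^3) = (D-1)*(8*D^3) + (D-1)*(u*(8*D^3)) := by ring
    have e2 : 2*D^2*u*(8*D^3) = 2*D^2*(u*(8*D^3)) := by ring
    rw [e1, e2, hu3]
    nlinarith
  have harith : (D-1)/L ≤ θ⁻¹ - θ⁻¹*(1+u)⁻¹ := by
    rw [hθinv]
    have e1 : 2*D^2/L - 2*D^2/L*(1+u)⁻¹ = 2*D^2*u/(L*(1+u)) := by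
      field_simp
      ring
    rw [e1, div_le_div_iff₀ hL (mul_pos hL h1u)]
    nlinarith [mul_le_mul_of_nonneg_right hinner hL.le]
  refine le_trans harith ?_
  have := mul_le_mul_of_nonneg_left hAle (inv_nonneg.mpr hθpos.le)
  linarith

set_option maxHeartbeats 2000000 in
/-- KL divergence of the Gaussian initialization `p₀ = N(0, (1/L)I)`
from `ν = e^{-U}` is `O(d^{(ℓ+1+α_N)/2})`, with a constant depending only on the
mixture-smoothness parameters. -/
theorem gaussian_initialization_kl_bound
    (N : ℕ) (hN : 0 < N) (L ℓ : ℝ) (hL : 0 < L) (hℓ : 0 ≤ ℓ)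
    (α : Fin N → ℝ) (hα0 : ∀ i, 0 < α i) (hα1 : ∀ i, α i ≤ 1) (hαmono : Monotone α) :
    ∃ C : ℝ, 0 < C ∧
      ∀ (d : ℕ), 0 < d →
      ∀ U : EuclideanSpace ℝ (Fin d) → ℝ, ContDiff ℝ 1 U →
        gradient U 0 = 0 →
        (∀ y, U y ≤ U 0 +
          (2 * L / (1 + α ⟨0, hN⟩)) * (1 + ‖y‖ ^ ℓ) * ∑ i, ‖y‖ ^ (1 + α i)) →
        (∫ x, Real.exp (-U x) = 1) →
        Integrable (fun x : EuclideanSpace ℝ (Fin d) =>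
          ((L / (2 * Real.pi)) ^ ((d : ℝ) / 2) * Real.exp (-(L * ‖x‖ ^ 2) / 2)) *
            Real.log (((L / (2 * Real.pi)) ^ ((d : ℝ) / 2) *
              Real.exp (-(L * ‖x‖ ^ 2) / 2)) / Real.exp (-U x))) →
        ∫ x, ((L / (2 * Real.pi)) ^ ((d : ℝ) / 2) * Real.exp (-(L * ‖x‖ ^ 2) / 2)) *
            Real.log (((L / (2 * Real.pi)) ^ ((d : ℝ) / 2) *
              Real.exp (-(L * ‖x‖ ^ 2) / 2)) / Real.exp (-U x)) ≤
          U 0 - ((d : ℝ) / 2) * Real.log (2 * Real.pi * Real.exp 1 / L) +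
            C * ((d : ℝ) + ℓ + 1 + α ⟨N - 1, Nat.sub_lt hN Nat.one_pos⟩) ^
              ((ℓ + 1 + α ⟨N - 1, Nat.sub_lt hN Nat.one_pos⟩) / 2) := by
  classical
  have hα0pos : 0 < α ⟨0, hN⟩ := hα0 _
  have hαNpos : 0 < α ⟨N - 1, Nat.sub_lt hN Nat.one_pos⟩ := hα0 _
  have hαN1 : α ⟨N - 1, Nat.sub_lt hN Nat.one_pos⟩ ≤ 1 := hα1 _
  have hαle : ∀ i : Fin N, α i ≤ α ⟨N - 1, Nat.sub_lt hN Nat.one_pos⟩ := by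
    intro i
    apply hαmono
    rw [Fin.le_def]
    simp only []
    omega
  set q : ℝ := (ℓ + 1 + α ⟨N - 1, Nat.sub_lt hN Nat.one_pos⟩) / 2 with hq
  set c₀ : ℝ := max 1 (2/L) with hc₀
  have hc₀1 : (1:ℝ) ≤ c₀ := le_max_left _ _
  have hc₀pos : (0:ℝ) < c₀ := lt_of_lt_of_le one_pos hc₀1
  set A : ℝ := 2 * L / (1 + α ⟨0, hN⟩) with hA
  have hApos : 0 < A := by
    rw [hA]
    have h1 : 0 < 1 + α ⟨0, hN⟩ := by linarith
    positivity
  have hqpos : 0 < q := by rw [hq]; linarith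
  refine ⟨A * (2*(N:ℝ)*c₀^q) + 1, ?_, ?_⟩
  · have hNpos : (0:ℝ) < (N:ℝ) := Nat.cast_pos.mpr hN
    have h2 : (0:ℝ) < A * (2*(N:ℝ)*c₀^q) := mul_pos hApos (by positivity)
    linarith
  intro d hd U hUc1 hgrad hU hnorm hInt
  set B : ℝ := (d:ℝ) + ℓ + 1 + α ⟨N - 1, Nat.sub_lt hN Nat.one_pos⟩ with hB
  have hd1 : (1:ℝ) ≤ (d:ℝ) := Nat.one_le_cast.mpr hd
  have hB1 : (1:ℝ) ≤ B := by rw [hB]; linarith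
  have hBq1 : (1:ℝ) ≤ B ^ q := by
    calc (1:ℝ) = B ^ (0:ℝ) := (Real.rpow_zero B).symm
      _ ≤ B ^ q := Real.rpow_le_rpow_of_exponent_le hB1 hqpos.le
  set c : ℝ := (L / (2 * π)) ^ ((d : ℝ) / 2) with hc
  have hcpos : 0 < c := by rw [hc]; positivity
  have hIp0 : Integrable (fun x : EuclideanSpace ℝ (Fin d) =>
      c * rexp (-(L*‖x‖^2)/2)) := by rw [hc]; exact integrable_p0 d hL
  have hIsq : Integrable (fun x : EuclideanSpace ℝ (Fin d) =>
      c * rexp (-(L*‖x‖^2)/2) * ‖x‖^2) := by rw [hc]; exact integrable_p0_sq d hL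
  have hIr : ∀ s : ℝ, 0 ≤ s → Integrable (fun x : EuclideanSpace ℝ (Fin d) =>
      c * rexp (-(L*‖x‖^2)/2) * ‖x‖ ^ s) := by
    intro s hs; rw [hc]; exact integrable_p0_rpow d hL hs
  have hF1 : ∫ x : EuclideanSpace ℝ (Fin d), c * rexp (-(L*‖x‖^2)/2) = 1 := by
    rw [hc]; exact p0_integral_one d hL
  have hlog : ∀ x : EuclideanSpace ℝ (Fin d),
      c * rexp (-(L*‖x‖^2)/2) * Real.log ((c * rexp (-(L*‖x‖^2)/2)) / rexp (-U x))
      = Real.log c * (c * rexp (-(L*‖x‖^2)/2))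
        + (-(L/2)) * (c * rexp (-(L*‖x‖^2)/2) * ‖x‖^2)
        + (c * rexp (-(L*‖x‖^2)/2)) * U x := by
    intro x
    rw [Real.log_div (by positivity) (Real.exp_ne_zero _),
        Real.log_mul hcpos.ne' (Real.exp_ne_zero _), Real.log_exp, Real.log_exp]
    ring
  have hIU : Integrable (fun x : EuclideanSpace ℝ (Fin d) =>
      (c * rexp (-(L*‖x‖^2)/2)) * U x) := by
    have hfe : (fun x : EuclideanSpace ℝ (Fin d) => (c * rexp (-(L*‖x‖^2)/2)) * U x)
        = fun x => (c * rexp (-(L*‖x‖^2)/2)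
            * Real.log ((c * rexp (-(L*‖x‖^2)/2)) / rexp (-U x)))
          - Real.log c * (c * rexp (-(L*‖x‖^2)/2))
          - (-(L/2)) * (c * rexp (-(L*‖x‖^2)/2) * ‖x‖^2) := by
      funext x; rw [hlog x]; ring
    rw [hfe]
    exact (hInt.sub (hIp0.const_mul _)).sub (hIsq.const_mul _)
  -- split the integral
  simp only [hlog]
  have hf1 : Integrable (fun x : EuclideanSpace ℝ (Fin d) =>
      Real.log c * (c * rexp (-(L*‖x‖^2)/2))) := hIp0.const_mul _
  have hf2 : Integrable (fun x : EuclideanSpace ℝ (Fin d) =>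
      (-(L/2)) * (c * rexp (-(L*‖x‖^2)/2) * ‖x‖^2)) := hIsq.const_mul _
  have hf12 : Integrable (fun x : EuclideanSpace ℝ (Fin d) =>
      Real.log c * (c * rexp (-(L*‖x‖^2)/2))
      + (-(L/2)) * (c * rexp (-(L*‖x‖^2)/2) * ‖x‖^2)) := hf1.add hf2
  rw [integral_add hf12 hIU, integral_add hf1 hf2,
    integral_const_mul (Real.log c), integral_const_mul (-(L/2)), hF1, mul_one]
  -- second moment lower bound
  have hS2 : ((d:ℝ)-1)/L ≤ ∫ x : EuclideanSpace ℝ (Fin d),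
      c * rexp (-(L*‖x‖^2)/2) * ‖x‖^2 := by
    rw [hc]; exact moment2_lower d hd hL
  -- moment bounds
  have hmom : ∀ s : ℝ, 0 < s → s ≤ ℓ + 1 + α ⟨N - 1, Nat.sub_lt hN Nat.one_pos⟩ →
      (∫ x : EuclideanSpace ℝ (Fin d), c * rexp (-(L*‖x‖^2)/2) * ‖x‖ ^ s)
        ≤ c₀^q * B^q := by
    intro s hs hsle
    have hds : ((d:ℝ)+s)/L ≤ c₀*B := by
      have h1 : (d:ℝ)+s ≤ B := by rw [hB]; linarith
      have h2 : ((d:ℝ)+s)/L ≤ B/L := (div_le_div_iff_of_pos_right hL).mpr h1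
      have h3 : B/L = (1/L)*B := by ring
      have h4 : (1/L)*B ≤ c₀*B := by
        apply mul_le_mul_of_nonneg_right ?_ (by linarith)
        calc 1/L ≤ 2/L := by
              apply (div_le_div_iff_of_pos_right hL).mpr; norm_num
          _ ≤ c₀ := le_max_right _ _
      linarith [h3 ▸ h2]
    have hc₀B1 : (1:ℝ) ≤ c₀*B := by nlinarith
    calc (∫ x : EuclideanSpace ℝ (Fin d), c * rexp (-(L*‖x‖^2)/2) * ‖x‖ ^ s)
        ≤ (((d:ℝ)+s)/L) ^ (s/2) := by rw [hc]; exact moment_upper d hd hL hs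
      _ ≤ (c₀*B) ^ (s/2) := Real.rpow_le_rpow (by positivity) hds (by positivity)
      _ ≤ (c₀*B) ^ q := Real.rpow_le_rpow_of_exponent_le hc₀B1 (by rw [hq]; linarith)
      _ = c₀^q * B^q := Real.mul_rpow hc₀pos.le (by linarith)
  -- bound on ∫ p₀ U
  have hexpand : ∀ x : EuclideanSpace ℝ (Fin d),
      (1 + ‖x‖ ^ ℓ) * ∑ i, ‖x‖ ^ (1 + α i)
      = ∑ i, (‖x‖ ^ (1 + α i) + ‖x‖ ^ (ℓ + (1 + α i))) := by
    intro x
    rw [Finset.mul_sum]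
    apply Finset.sum_congr rfl
    intro i _
    have h0 : ℓ + (1 + α i) ≠ 0 := by have := hα0 i; positivity
    rw [Real.rpow_add' (norm_nonneg x) h0, add_mul, one_mul]
  have hIsum : Integrable (fun x : EuclideanSpace ℝ (Fin d) =>
      ∑ i, (c * rexp (-(L*‖x‖^2)/2) * ‖x‖ ^ (1 + α i)
        + c * rexp (-(L*‖x‖^2)/2) * ‖x‖ ^ (ℓ + (1 + α i)))) := by
    apply integrable_finset_sum
    intro i _
    exact (hIr (1 + α i) (by linarith [hα0 i])).add
      (hIr (ℓ + (1 + α i)) (by linarith [hα0 i]))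
  have hptU : ∀ x : EuclideanSpace ℝ (Fin d),
      (c * rexp (-(L*‖x‖^2)/2)) * U x
      ≤ (c * rexp (-(L*‖x‖^2)/2)) * U 0
        + A * ∑ i, (c * rexp (-(L*‖x‖^2)/2) * ‖x‖ ^ (1 + α i)
          + c * rexp (-(L*‖x‖^2)/2) * ‖x‖ ^ (ℓ + (1 + α i))) := by
    intro x
    have hFnn : (0:ℝ) ≤ c * rexp (-(L*‖x‖^2)/2) := by positivity
    have h1 := mul_le_mul_of_nonneg_left (hU x) hFnn
    calc (c * rexp (-(L*‖x‖^2)/2)) * U x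
        ≤ (c * rexp (-(L*‖x‖^2)/2)) * (U 0 + A * (1 + ‖x‖ ^ ℓ) * ∑ i, ‖x‖ ^ (1 + α i)) := h1
      _ = (c * rexp (-(L*‖x‖^2)/2)) * U 0
          + A * ((c * rexp (-(L*‖x‖^2)/2)) * ((1 + ‖x‖ ^ ℓ) * ∑ i, ‖x‖ ^ (1 + α i))) := by
          ring
      _ = (c * rexp (-(L*‖x‖^2)/2)) * U 0
          + A * ∑ i, (c * rexp (-(L*‖x‖^2)/2) * ‖x‖ ^ (1 + α i)
            + c * rexp (-(L*‖x‖^2)/2) * ‖x‖ ^ (ℓ + (1 + α i))) := by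
          rw [hexpand x, Finset.mul_sum]
          simp_rw [mul_add]
  have hG : Integrable (fun x : EuclideanSpace ℝ (Fin d) =>
      (c * rexp (-(L*‖x‖^2)/2)) * U 0
      + A * ∑ i, (c * rexp (-(L*‖x‖^2)/2) * ‖x‖ ^ (1 + α i)
        + c * rexp (-(L*‖x‖^2)/2) * ‖x‖ ^ (ℓ + (1 + α i)))) :=
    (hIp0.mul_const _).add (hIsum.const_mul A)
  have hadd : ∀ i : Fin N, Integrable (fun x : EuclideanSpace ℝ (Fin d) =>
      c * rexp (-(L*‖x‖^2)/2) * ‖x‖ ^ (1 + α i)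
      + c * rexp (-(L*‖x‖^2)/2) * ‖x‖ ^ (ℓ + (1 + α i))) := fun i =>
    (hIr (1 + α i) (by linarith [hα0 i])).add
      (hIr (ℓ + (1 + α i)) (by linarith [hα0 i]))
  have hIUb : (∫ x : EuclideanSpace ℝ (Fin d), (c * rexp (-(L*‖x‖^2)/2)) * U x)
      ≤ U 0 + A * ((N:ℝ) * (2 * (c₀^q * B^q))) := by
    have hmono := integral_mono hIU hG hptU
    rw [integral_add (hIp0.mul_const _) (hIsum.const_mul A),
      integral_mul_const, hF1, one_mul, integral_const_mul,
      integral_finset_sum _ (fun i _ => hadd i)] at hmono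
    refine le_trans hmono ?_
    have hsum_le : ∑ i : Fin N, (∫ x : EuclideanSpace ℝ (Fin d),
          (c * rexp (-(L*‖x‖^2)/2) * ‖x‖ ^ (1 + α i)
            + c * rexp (-(L*‖x‖^2)/2) * ‖x‖ ^ (ℓ + (1 + α i))))
        ≤ (N:ℝ) * (2 * (c₀^q * B^q)) := by
      have hterm : ∀ i : Fin N, (∫ x : EuclideanSpace ℝ (Fin d),
            (c * rexp (-(L*‖x‖^2)/2) * ‖x‖ ^ (1 + α i)
              + c * rexp (-(L*‖x‖^2)/2) * ‖x‖ ^ (ℓ + (1 + α i))))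
          ≤ 2 * (c₀^q * B^q) := by
        intro i
        rw [integral_add (hIr (1 + α i) (by linarith [hα0 i]))
          (hIr (ℓ + (1 + α i)) (by linarith [hα0 i]))]
        have ha := hmom (1 + α i) (by linarith [hα0 i]) (by linarith [hαle i])
        have hb := hmom (ℓ + (1 + α i)) (by linarith [hα0 i]) (by linarith [hαle i])
        linarith
      calc ∑ i : Fin N, (∫ x : EuclideanSpace ℝ (Fin d),
            (c * rexp (-(L*‖x‖^2)/2) * ‖x‖ ^ (1 + α i)
              + c * rexp (-(L*‖x‖^2)/2) * ‖x‖ ^ (ℓ + (1 + α i))))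
          ≤ ∑ _i : Fin N, 2 * (c₀^q * B^q) :=
            Finset.sum_le_sum (fun i _ => hterm i)
        _ = (N:ℝ) * (2 * (c₀^q * B^q)) := by
            rw [Finset.sum_const, Finset.card_univ, Fintype.card_fin, nsmul_eq_mul]
    have := mul_le_mul_of_nonneg_left hsum_le hApos.le
    linarith
  -- final assembly
  have hlogc : Real.log c = ((d:ℝ)/2) * (Real.log L - Real.log (2*π)) := by
    rw [hc, Real.log_rpow (by positivity), Real.log_div hL.ne' (by positivity)]
  have hlog2 : Real.log (2 * π * Real.exp 1 / L)
      = Real.log (2*π) + 1 - Real.log L := by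
    rw [Real.log_div (by positivity) hL.ne',
      Real.log_mul (by positivity) (Real.exp_ne_zero 1), Real.log_exp]
  have hS2' : (-(L/2)) * (∫ x : EuclideanSpace ℝ (Fin d),
      c * rexp (-(L*‖x‖^2)/2) * ‖x‖^2) ≤ -(((d:ℝ)-1)/2) := by
    have h1 := mul_le_mul_of_nonpos_left hS2 (by linarith : -(L/2) ≤ 0)
    have h2 : -(L/2) * (((d:ℝ)-1)/L) = -(((d:ℝ)-1)/2) := by field_simp
    linarith [h2 ▸ h1]
  rw [hlogc, hlog2]
  have hkey : A * ((N:ℝ) * (2 * (c₀^q * B^q))) = (A * (2*(N:ℝ)*c₀^q)) * B^q := by ring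
  rw [hkey] at hIUb
  nlinarith [hBq1, hIUb, hS2']
end
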